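/- arXiv:2208.00366 — 2 statements merged into one kernel-verified Lean document; each statement's English description precedes it below -/
import Mathlib

section
/- For every integer d ≥ 2, the infimum of the asymptotic critical exponent over all uniformly recurrent sequences over a d-letter alphabet equals 1; consequently RT*(d) := inf{E*(u) : u a sequence over a d-letter alphabet} = 1 for every d ≥ 2. -/
open Filter Topology Matrix
open scoped ENNReal

namespace Paper

variable {A : Type*}

/-- The factor of `u` of length `len` starting at position `i`. -/
def factorAt (u : ℕ → A) (i len : ℕ) : List A :=
  (List.range len).map fun k => u (i + k)

/-- The word `w` occurs in `u` at position `i`. -/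
def OccursAt (u : ℕ → A) (w : List A) (i : ℕ) : Prop :=
  w = factorAt u i w.length

/-- `w` is a factor of the sequence `u`. -/
def IsFactor (u : ℕ → A) (w : List A) : Prop :=
  ∃ i, OccursAt u w i

/-- `u` is recurrent: every factor occurs infinitely often. -/
def Recurrent (u : ℕ → A) : Prop :=
  ∀ w, IsFactor u w → ∀ N, ∃ i, N ≤ i ∧ OccursAt u w i

/-- `u` is uniformly recurrent: every factor occurs in every window of some fixed length. -/
def UniformlyRecurrent (u : ℕ → A) : Prop :=
  ∀ w, IsFactor u w → ∃ R, ∀ i, ∃ j, i ≤ j ∧ j < i + R ∧ OccursAt u w j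

/-- `u` is eventually periodic. -/
def EventuallyPeriodic (u : ℕ → A) : Prop :=
  ∃ p, 0 < p ∧ ∃ N, ∀ n, N ≤ n → u (n + p) = u n

/-- `u` is balanced: counts of each letter in equal-length factors differ by at most 1. -/
def IsBalanced [DecidableEq A] (u : ℕ → A) : Prop :=
  ∀ (c : A) (w w' : List A), IsFactor u w → IsFactor u w' → w.length = w'.length →
    (w.count c : ℤ) - (w'.count c : ℤ) ≤ 1

/-- `w^{n/|w|}`, i.e. the prefix of length `n` of `w^ω`, is a factor of `u`
(for a nonempty word `w`). -/
def HasPowerFactor (u : ℕ → A) (w : List A) (n : ℕ) : Prop :=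
  w ≠ [] ∧ ∃ i, ∀ k, k < n → u (i + k) = w.getD (k % w.length) (u i)

/-- The critical exponent `E(u)`. -/
noncomputable def critExp (u : ℕ → A) : ℝ≥0∞ :=
  sSup {e | ∃ w n, HasPowerFactor u w n ∧ e = (n : ℝ≥0∞) / (w.length : ℝ≥0∞)}

/-- The maximal exponent of a repetition whose root has length `l`. -/
noncomputable def maxExpLen (u : ℕ → A) (l : ℕ) : ℝ≥0∞ :=
  sSup {e | ∃ w n, (w : List A).length = l ∧ HasPowerFactor u w n ∧
    e = (n : ℝ≥0∞) / (l : ℝ≥0∞)}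

/-- The asymptotic critical exponent `E*(u)`. -/
noncomputable def acritExp (u : ℕ → A) : ℝ≥0∞ :=
  if critExp u = ⊤ then ⊤ else Filter.limsup (fun l => maxExpLen u l) Filter.atTop

/-- `w` is a right special factor of `u`. -/
def RightSpecial (u : ℕ → A) (w : List A) : Prop :=
  ∃ c c' : A, c ≠ c' ∧ IsFactor u (w ++ [c]) ∧ IsFactor u (w ++ [c'])

/-- `w` is a left special factor of `u`. -/
def LeftSpecial (u : ℕ → A) (w : List A) : Prop :=
  ∃ c c' : A, c ≠ c' ∧ IsFactor u (c :: w) ∧ IsFactor u (c' :: w)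

/-- `w` is a bispecial factor of `u`. -/
def Bispecial (u : ℕ → A) (w : List A) : Prop := LeftSpecial u w ∧ RightSpecial u w

/-- `r` is a return word to `w` in `u`: the word between two consecutive occurrences of `w`. -/
def IsReturnWord (u : ℕ → A) (w r : List A) : Prop :=
  ∃ i j, i < j ∧ OccursAt u w i ∧ OccursAt u w j ∧
    (∀ t, i < t → t < j → ¬ OccursAt u w t) ∧ r = factorAt u i (j - i)

/-- A Sturmian sequence: an aperiodic balanced sequence over the binary
alphabet `Bool` (`false` = letter a, `true` = letter b). -/
def IsSturmian (u : ℕ → Bool) : Prop :=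
  ¬ EventuallyPeriodic u ∧ IsBalanced u

/-- Prepend a letter to a sequence. -/
def prepend (c : A) (u : ℕ → A) : ℕ → A
  | 0 => c
  | n + 1 => u n

/-- A standard Sturmian sequence: `u`, `a·u` and `b·u` are all Sturmian. -/
def IsStandard (u : ℕ → Bool) : Prop :=
  IsSturmian u ∧ IsSturmian (prepend false u) ∧ IsSturmian (prepend true u)

/-- The letter `c` has frequency `ρ` in `u`. -/
def HasFreq [DecidableEq A] (u : ℕ → A) (c : A) (ρ : ℝ) : Prop :=
  Tendsto (fun n => ((factorAt u 0 n).count c : ℝ) / n) atTop (𝓝 ρ)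

/-- `u` has slope `θ = ρ_a(u)/ρ_b(u)`, with `b = true` the most frequent letter. -/
def HasSlope (u : ℕ → Bool) (θ : ℝ) : Prop :=
  ∃ ρa ρb : ℝ, HasFreq u false ρa ∧ HasFreq u true ρb ∧ ρa < ρb ∧ θ = ρa / ρb

/-- `cfP a N` is the numerator `p_{N-1}` of the convergents of the continued
fraction `[0; a 1, a 2, …]` (index shifted by one: `cfP a 0 = p_{-1} = 1`). -/
def cfP (a : ℕ → ℕ) : ℕ → ℕ
  | 0 => 1
  | 1 => 0
  | n + 2 => a (n + 1) * cfP a (n + 1) + cfP a n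

/-- `cfQ a N` is the denominator `q_{N-1}` of the convergents of the continued
fraction `[0; a 1, a 2, …]` (index shifted by one: `cfQ a 0 = q_{-1} = 0`). -/
def cfQ (a : ℕ → ℕ) : ℕ → ℕ
  | 0 => 0
  | 1 => 1
  | n + 2 => a (n + 1) * cfQ a (n + 1) + cfQ a n

/-- The value of the continued fraction `[0; a 1, a 2, …]`, as the limit of its
convergents `p_N / q_N`. -/
noncomputable def cfValue (a : ℕ → ℕ) : ℝ :=
  limUnder atTop fun N => (cfP a (N + 1) : ℝ) / (cfQ a (N + 1) : ℝ)

/-- `δ_N = [a_{N+1}; a_{N+2}, …]`, the inverse of the value of the shifted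
continued fraction `[0; a_{N+1}, a_{N+2}, …]`. -/
noncomputable def cfDelta (a : ℕ → ℕ) (N : ℕ) : ℝ :=
  (cfValue fun n => a (n + N))⁻¹

/-- `Q_{N-1} = p_{N-1} + q_{N-1}` (shifted index as in `cfP`, `cfQ`). -/
def cfQpair (a : ℕ → ℕ) (N : ℕ) : ℕ := cfP a N + cfQ a N

/-- The matrix `A_N` with rows `(p_{N-1}, p_N)` and `(q_{N-1}, q_N)`. -/
def cfMat (a : ℕ → ℕ) (N : ℕ) : Matrix (Fin 2) (Fin 2) ℤ :=
  !![(cfP a N : ℤ), (cfP a (N + 1) : ℤ); (cfQ a N : ℤ), (cfQ a (N + 1) : ℤ)]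

/-- The colouring of a binary sequence `u` by `y` (on the letter `a = false`) and
`y'` (on the letter `b = true`). -/
def colour (u : ℕ → Bool) (y y' : ℕ → A) (n : ℕ) : A :=
  if u n then y' ((List.range n).countP fun k => u k)
  else y ((List.range n).countP fun k => !u k)

/-- Colouring of a finite binary word by the sequences `y` and `y'`. -/
def colourWord : (ℕ → A) → (ℕ → A) → List Bool → List A
  | _, _, [] => []
  | y, y', c :: w =>
      if c then y' 0 :: colourWord y (fun n => y' (n + 1)) w
      else y 0 :: colourWord (fun n => y (n + 1)) y' w

/-- A constant gap sequence: every occurring letter occurs with a constant gap. -/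
def IsConstantGap (y : ℕ → A) : Prop :=
  ∀ c : A, (∃ n, y n = c) →
    ∃ g, 0 < g ∧ ∀ n, y n = c →
      y (n + g) = c ∧ ∀ t, 0 < t → t < g → y (n + t) ≠ c

/-- The minimal period of a sequence. -/
noncomputable def minPeriod (y : ℕ → A) : ℕ :=
  sInf {p | 0 < p ∧ ∀ n, y (n + p) = y n}

/-- `d` is a derived sequence of `u` to the factor `z`: coding (by a binary
alphabet, via an injective labelling `f` of return words) of the decomposition
of `u` into return words to `z`. -/
def IsDerivedSeq (u : ℕ → Bool) (z : List Bool) (d : ℕ → Bool) : Prop :=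
  ∃ (occ : ℕ → ℕ) (f : Bool → List Bool),
    StrictMono occ ∧ (∀ n, OccursAt u z (occ n)) ∧
    (∀ i, OccursAt u z i → ∃ n, occ n = i) ∧
    f true ≠ f false ∧
    ∀ n, factorAt u (occ n) (occ (n + 1) - occ n) = f (d n)

/-- The equivalence of unimodular matrices: `M ≡ M'` iff `diag(c,c')·M ≡ M'`
with the first row mod `Y` and the second row mod `Y'`, for some `c` coprime
with `Y` and `c'` coprime with `Y'`. -/
def MatEquiv (Y Y' : ℕ) (M M' : Matrix (Fin 2) (Fin 2) ℤ) : Prop :=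
  ∃ c c' : ℤ, IsCoprime c (Y : ℤ) ∧ IsCoprime c' (Y' : ℤ) ∧
    (∀ j, (Y : ℤ) ∣ (c * M 0 j - M' 0 j)) ∧
    (∀ j, (Y' : ℤ) ∣ (c' * M 1 j - M' 1 j))

/-- `δ > 1` is `(1+β)`-forcing for (the class of) the matrix `M`, with respect to
the periods `P`, `P'`. -/
def IsForcing (β : ℝ) (P P' : ℕ) (M : Matrix (Fin 2) (Fin 2) ℤ) (δ : ℝ) : Prop :=
  1 < δ ∧ ∃ m k l : ℕ, 0 < k + l ∧
    -- (P1)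
    ((P : ℤ) ∣ (M 0 0 * (l : ℤ) + M 0 1 * ((m : ℤ) * l + k)) ∧
     (P' : ℤ) ∣ (M 1 0 * (l : ℤ) + M 1 1 * ((m : ℤ) * l + k))) ∧
    -- (P2)
    ((m : ℝ) + 1 < δ ∧ |(l : ℝ) * (δ - m) - k| < δ - m + 1) ∧
    -- (P3)
    ((k = l → β < 1 / (k : ℝ)) ∧
     (l < k → β ≤ (1 + (m : ℝ)) / ((k : ℝ) + m * l)) ∧
     (k < l → β ≤ (2 + (m : ℝ)) / ((k : ℝ) + (m + 1) * l)))

/-- The set `F(β, M)` of `(1+β)`-forcing `δ`'s. -/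
def ForcingSet (β : ℝ) (P P' : ℕ) (M : Matrix (Fin 2) (Fin 2) ℤ) : Set ℝ :=
  {δ | IsForcing β P P' M δ}

/-- The set `D(β, M) = {δ > 1 : δ is not in the closure of F(β, M)}`. -/
def DSet (β : ℝ) (P P' : ℕ) (M : Matrix (Fin 2) (Fin 2) ℤ) : Set ℝ :=
  {δ | 1 < δ ∧ δ ∉ closure (ForcingSet β P P' M)}

/-- The finite Fibonacci words: fixed-point prefixes of `b ↦ ba`, `a ↦ b`,
where `b = true`, `a = false`. -/
def fibList : ℕ → List Bool
  | 0 => [true]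
  | 1 => [true, false]
  | n + 2 => fibList (n + 1) ++ fibList n

/-- The Fibonacci sequence, the fixed point of `b ↦ ba`, `a ↦ b`. -/
def fibWord (n : ℕ) : Bool := (fibList (n + 2)).getD n true

end Paper

namespace Paper

open scoped ENNReal



/-- generalized Rudin–Shapiro digit function: sum of products of consecutive
base-`m` digits, mod `m`. -/
def rs (m : ℕ) : ℕ → ℕ
  | 0 => 0
  | t+1 => (rs m ((t+1) / max m 2) + ((t+1) % m) * (((t+1) / max m 2) % m)) % m
  decreasing_by exact Nat.div_lt_self (Nat.succ_pos _) (lt_of_lt_of_le one_lt_two (le_max_right m 2))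

lemma rs_zero (m : ℕ) : rs m 0 = 0 := by rw [rs]

lemma rs_rec (m : ℕ) (hm : 2 ≤ m) (t : ℕ) :
    rs m t = (rs m (t / m) + (t % m) * ((t / m) % m)) % m := by
  cases t with
  | zero => simp [rs]
  | succ t =>
    rw [rs, max_eq_left hm]

lemma rs_lt (m : ℕ) (hm : 2 ≤ m) (t : ℕ) : rs m t < m := by
  rw [rs_rec m hm t]
  exact Nat.mod_lt _ (by omega)

/-- one substitution step -/
def fstep (m j : ℕ) (σ : ℕ × ℕ) : ℕ × ℕ := (j, (σ.2 + j * σ.1) % m)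

/-- the letter pair (phase, rs-value) -/
def fp (m t : ℕ) : ℕ × ℕ := (t % m, rs m t)

lemma fp_step (m : ℕ) (hm : 2 ≤ m) (t : ℕ) :
    fp m t = fstep m (t % m) (fp m (t / m)) := by
  unfold fp fstep
  simp only [Prod.mk.injEq, true_and]
  exact rs_rec m hm t

/-- descend `k` levels -/
def lett (m : ℕ) : ℕ → (ℕ × ℕ) → ℕ → (ℕ × ℕ)
  | 0, σ, _ => σ
  | (k+1), σ, o => fstep m (o % m) (lett m k σ (o / m))

def Good (m : ℕ) (σ : ℕ × ℕ) : Prop := σ.1 < m ∧ σ.2 < m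

lemma good_fstep (m j : ℕ) (hm : 0 < m) (hj : j < m) (σ : ℕ × ℕ) : Good m (fstep m j σ) :=
  ⟨hj, Nat.mod_lt _ hm⟩

lemma good_lett (m : ℕ) (hm : 0 < m) (k : ℕ) (σ : ℕ × ℕ) (hσ : Good m σ) (o : ℕ) :
    Good m (lett m k σ o) := by
  induction k generalizing o with
  | zero => exact hσ
  | succ k ih => exact good_fstep m _ hm (Nat.mod_lt _ hm) _

lemma good_fp (m : ℕ) (hm : 2 ≤ m) (t : ℕ) : Good m (fp m t) :=
  ⟨Nat.mod_lt _ (by omega), rs_lt m hm t⟩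

lemma fp_decomp (m : ℕ) (hm : 2 ≤ m) : ∀ (k T o : ℕ), o < m ^ k →
    fp m (T * m ^ k + o) = lett m k (fp m T) o := by
  intro k
  induction k with
  | zero =>
    intro T o ho
    have : o = 0 := by simpa using ho
    subst this
    simp [lett]
  | succ k ih =>
    intro T o ho
    have hm0 : 0 < m := by omega
    have h1 : (T * m ^ (k+1) + o) % m = o % m := by
      rw [pow_succ]
      rw [show T * (m ^ k * m) + o = m * (T * m ^ k) + o by ring]
      rw [Nat.mul_add_mod]
    have h2 : (T * m ^ (k+1) + o) / m = T * m ^ k + o / m := by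
      rw [pow_succ]
      rw [show T * (m ^ k * m) + o = m * (T * m ^ k) + o by ring]
      rw [Nat.mul_add_div hm0]
    rw [fp_step m hm, h1, h2, ih T (o / m) (by
      rw [Nat.div_lt_iff_lt_mul hm0]
      rw [pow_succ] at ho; exact ho)]
    rfl

/-- adjacent-pair injectivity -/
lemma pair_inj (m : ℕ) (j : ℕ) (σ σ' : ℕ × ℕ)
    (hσ : Good m σ) (hσ' : Good m σ')
    (h1 : fstep m j σ = fstep m j σ') (h2 : fstep m (j+1) σ = fstep m (j+1) σ') :
    σ = σ' := by
  obtain ⟨p, v⟩ := σ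
  obtain ⟨p', v'⟩ := σ'
  simp only [fstep, Prod.mk.injEq, true_and] at h1 h2
  have e1 : ((v + j * p : ℕ) : ZMod m) = ((v' + j * p' : ℕ) : ZMod m) :=
    (ZMod.natCast_eq_natCast_iff _ _ _).mpr h1
  have e2 : ((v + (j+1) * p : ℕ) : ZMod m) = ((v' + (j+1) * p' : ℕ) : ZMod m) :=
    (ZMod.natCast_eq_natCast_iff _ _ _).mpr h2
  push_cast at e1 e2
  have ep : ((p : ZMod m)) = (p' : ZMod m) := by
    have := e2
    rw [add_one_mul, add_one_mul, ← add_assoc, ← add_assoc] at this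
    rw [e1] at this
    exact add_left_cancel this
  have hp : p = p' := by
    have := (ZMod.natCast_eq_natCast_iff _ _ _).mp ep
    unfold Nat.ModEq at this
    rw [Nat.mod_eq_of_lt hσ.1, Nat.mod_eq_of_lt hσ'.1] at this
    exact this
  subst hp
  have ev : ((v : ZMod m)) = (v' : ZMod m) := by
    rw [ep] at e1
    exact add_right_cancel e1
  have hv : v = v' := by
    have := (ZMod.natCast_eq_natCast_iff _ _ _).mp ev
    unfold Nat.ModEq at this
    rw [Nat.mod_eq_of_lt hσ.2, Nat.mod_eq_of_lt hσ'.2] at this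
    exact this
  simp [hv]



/-- gap bounds for level-k difference syndeticity -/
def gapA (m : ℕ) : ℕ → ℕ
  | 0 => 2
  | k+1 => gapA m k * m + 2 * m

lemma gapA_le (m : ℕ) (hm : 2 ≤ m) : ∀ k, gapA m k + 4 ≤ 6 * m ^ k := by
  intro k
  induction k with
  | zero => simp [gapA]
  | succ k ih =>
    have hmul2 : (gapA m k + 4) * m ≤ (6 * m ^ k) * m := Nat.mul_le_mul_right m ih
    have e : (gapA m k + 4) * m = gapA m k * m + 4 * m := by ring
    have e2 : (6 * m ^ k) * m = 6 * (m ^ k * m) := by ring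
    have e3 : m ^ (k+1) = m ^ k * m := pow_succ m k
    show gapA m k * m + 2 * m + 4 ≤ 6 * m ^ (k+1)
    rw [e3]
    omega

lemma gapA_pos (m : ℕ) (hm : 1 ≤ m) : ∀ k, 2 ≤ gapA m k := by
  intro k; cases k with
  | zero => simp [gapA]
  | succ k =>
    show 2 ≤ gapA m k * m + 2 * m
    omega

lemma lett_one (m : ℕ) (hm0 : 0 < m) (σ : ℕ × ℕ) (o : ℕ) (ho : o < m) :
    lett m 1 σ o = fstep m o σ := by
  show fstep m (o % m) (lett m 0 σ (o / m)) = fstep m o σ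
  rw [Nat.mod_eq_of_lt ho]
  rfl

lemma lett_succ_slot (m : ℕ) (hm0 : 0 < m) (k : ℕ) (σ : ℕ × ℕ) (t j : ℕ) (hj : j < m) :
    lett m (k+1) σ (t * m + j) = fstep m j (lett m k σ t) := by
  have e1 : (t*m+j) % m = j := by
    rw [mul_comm, Nat.mul_add_mod]; exact Nat.mod_eq_of_lt hj
  have e2 : (t*m+j) / m = t := by
    rw [mul_comm, Nat.mul_add_div hm0, Nat.div_eq_of_lt hj, add_zero]
  show fstep m ((t*m+j) % m) (lett m k σ ((t*m+j) / m)) = fstep m j (lett m k σ t)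
  rw [e1, e2]

/-- Syndetic difference propagation. -/
lemma lett_diff (m : ℕ) (hm : 2 ≤ m) (σ σ' : ℕ × ℕ)
    (hσ : Good m σ) (hσ' : Good m σ') (hne : σ ≠ σ') :
    ∀ (k a : ℕ), a + gapA m k ≤ m ^ (k+1) →
    ∃ o, a ≤ o ∧ o < a + gapA m k ∧ lett m (k+1) σ o ≠ lett m (k+1) σ' o := by
  intro k
  have hm0 : 0 < m := by omega
  induction k with
  | zero =>
    intro a ha
    have ha1 : a + 2 ≤ m := by simpa [gapA, pow_one] using ha
    have hdiff : fstep m a σ ≠ fstep m a σ' ∨ fstep m (a+1) σ ≠ fstep m (a+1) σ' := by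
      by_contra h
      push_neg at h
      exact hne (pair_inj m a σ σ' hσ hσ' h.1 h.2)
    have hg : gapA m 0 = 2 := rfl
    rcases hdiff with h | h
    · exact ⟨a, le_refl _, by omega, by
        rw [lett_one m hm0 σ a (by omega), lett_one m hm0 σ' a (by omega)]; exact h⟩
    · exact ⟨a+1, by omega, by omega, by
        rw [lett_one m hm0 σ (a+1) (by omega), lett_one m hm0 σ' (a+1) (by omega)]; exact h⟩
  | succ k ih =>
    intro a ha
    set t0 := a / m + 1 with ht0
    have h3 := Nat.div_add_mod a m
    have hmoda := Nat.mod_lt a hm0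
    have et0 : t0 * m = m * (a / m) + m := by rw [ht0]; ring
    have hta : a < t0 * m := by omega
    have htb : t0 * m ≤ a + m := by omega
    have hga : a + (gapA m k * m + 2 * m) ≤ m ^ (k+2) := by
      simpa [gapA] using ha
    have hwin : t0 + gapA m k ≤ m ^ (k+1) := by
      have e : (t0 + gapA m k) * m = t0 * m + gapA m k * m := by ring
      have e2 : m ^ (k+2) = m ^ (k+1) * m := by ring
      have h4 : (t0 + gapA m k) * m < m ^ (k+1) * m := by omega
      exact le_of_lt (Nat.lt_of_mul_lt_mul_right h4)
    obtain ⟨t, ht1, ht2, htd⟩ := ih t0 hwin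
    have hgood : Good m (lett m (k+1) σ t) := good_lett m hm0 _ _ hσ _
    have hgood' : Good m (lett m (k+1) σ' t) := good_lett m hm0 _ _ hσ' _
    have hdiff : fstep m 0 (lett m (k+1) σ t) ≠ fstep m 0 (lett m (k+1) σ' t) ∨
        fstep m 1 (lett m (k+1) σ t) ≠ fstep m 1 (lett m (k+1) σ' t) := by
      by_contra h
      push_neg at h
      exact htd (pair_inj m 0 _ _ hgood hgood' h.1 h.2)
    have hlow : t0 * m ≤ t * m := Nat.mul_le_mul_right m ht1
    have hobound : t * m + 1 < a + gapA m (k+1) := by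
      have h1 : t ≤ a/m + gapA m k := by omega
      have h2 : t*m ≤ (a/m + gapA m k)*m := Nat.mul_le_mul_right m h1
      have e : (a/m + gapA m k)*m = (a/m)*m + gapA m k*m := by ring
      have e2 : (a/m)*m ≤ a := Nat.div_mul_le_self a m
      have h5 : gapA m (k+1) = gapA m k*m + 2*m := rfl
      omega
    rcases hdiff with h | h
    · refine ⟨t * m + 0, by omega, by omega, ?_⟩
      rw [lett_succ_slot m hm0 (k+1) σ t 0 hm0, lett_succ_slot m hm0 (k+1) σ' t 0 hm0]
      exact h
    · refine ⟨t * m + 1, by omega, by omega, ?_⟩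
      rw [lett_succ_slot m hm0 (k+1) σ t 1 (by omega), lett_succ_slot m hm0 (k+1) σ' t 1 (by omega)]
      exact h


lemma mod_cancel_of_add (t h m : ℕ) (he : (t + h) % m = t % m) : h % m = 0 := by
  have h1 : ((t + h : ℕ) : ZMod m) = ((t : ℕ) : ZMod m) :=
    (ZMod.natCast_eq_natCast_iff _ _ _).mpr he
  push_cast at h1
  have h2 : ((h : ℕ) : ZMod m) = ((0 : ℕ) : ZMod m) := by
    push_cast
    linear_combination h1
  have := (ZMod.natCast_eq_natCast_iff _ _ _).mp h2
  simpa [Nat.ModEq] using this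

lemma fp_ne_shift (m : ℕ) (h : ℕ) (hh : h % m ≠ 0) (t : ℕ) :
    fp m t ≠ fp m (t + h) := by
  intro he
  have : (t + h) % m = t % m := by
    have := congrArg Prod.fst he
    simpa [fp] using this.symm
  exact hh (mod_cancel_of_add t h m this)

lemma exists_pow_factor (m : ℕ) (hm : 2 ≤ m) :
    ∀ Λ, 1 ≤ Λ → ∃ b h, Λ = h * m ^ b ∧ h % m ≠ 0 := by
  intro Λ
  induction Λ using Nat.strong_induction_on with
  | _ Λ ih =>
    intro hΛ
    by_cases hc : Λ % m = 0
    · have hdvd : m ∣ Λ := Nat.dvd_of_mod_eq_zero hc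
      obtain ⟨Λ', hΛ'⟩ := hdvd
      have hΛ'1 : 1 ≤ Λ' := by
        rcases Nat.eq_zero_or_pos Λ' with h0 | h0
        · subst h0; simp at hΛ'; omega
        · exact h0
      have hlt : Λ' < Λ := by nlinarith
      obtain ⟨b, h, he, hne⟩ := ih Λ' hlt hΛ'1
      exact ⟨b + 1, h, by rw [hΛ', he, pow_succ]; ring, hne⟩
    · exact ⟨0, Λ, by simp, hc⟩

lemma rs_add_high (m : ℕ) (hm : 2 ≤ m) :
    ∀ (K t a : ℕ), t < m ^ K → rs m (t + m ^ (K+1) * a) = (rs m t + rs m a) % m := by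
  intro K
  have hm0 : 0 < m := by omega
  induction K with
  | zero =>
    intro t a ht
    have ht0 : t = 0 := by simpa using ht
    subst ht0
    have e1 : (0:ℕ) + m ^ 1 * a = m * a := by ring
    rw [e1, rs_rec m hm (m * a), Nat.mul_div_cancel_left a hm0, Nat.mul_mod_right]
    simp [rs_zero, Nat.mod_eq_of_lt (rs_lt m hm a)]
  | succ K ih =>
    intro t a ht
    set n := t + m ^ (K+2) * a with hn
    have e0 : m ^ (K+2) * a = m * (m ^ (K+1) * a) := by ring
    have e1 : n % m = t % m := by
      rw [hn, e0, Nat.add_mul_mod_self_left]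
    have e2 : n / m = t / m + m ^ (K+1) * a := by
      rw [hn, e0, Nat.add_mul_div_left _ _ hm0]
    have e3 : (n / m) % m = (t / m) % m := by
      rw [e2]
      have : m ^ (K+1) * a = m * (m ^ K * a) := by ring
      rw [this, Nat.add_mul_mod_self_left]
    have htK : t / m < m ^ K := by
      rw [Nat.div_lt_iff_lt_mul hm0]
      rw [← pow_succ]
      exact ht
    calc rs m n = (rs m (n / m) + (n % m) * ((n / m) % m)) % m := rs_rec m hm n
      _ = ((rs m (t / m) + rs m a) % m + (t % m) * ((t / m) % m)) % m := by
          rw [e1, e3, e2, ih (t/m) a htK]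
      _ = ((rs m (t / m) + rs m a) + (t % m) * ((t / m) % m)) % m := by
          rw [Nat.mod_add_mod]
      _ = ((rs m (t / m) + (t % m) * ((t / m) % m)) + rs m a) % m := by
          ring_nf
      _ = ((rs m (t / m) + (t % m) * ((t / m) % m)) % m + rs m a) % m := by
          rw [Nat.mod_add_mod]
      _ = (rs m t + rs m a) % m := by rw [← rs_rec m hm t]

lemma rs_zero_window (m : ℕ) (hm : 2 ≤ m) (x : ℕ) :
    ∃ a, x ≤ a ∧ a ≤ x + 2 * m ^ 2 ∧ rs m a = 0 := by
  have hm0 : 0 < m := by omega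
  have hm20 : 0 < m ^ 2 := by positivity
  set A := x / m ^ 2 + 1 with hA
  set c := rs m (A * m + 1) with hc
  have hcm : c < m := rs_lt m hm _
  set y := (m - c) % m with hy
  have hym : y < m := Nat.mod_lt _ hm0
  set a := (A * m + 1) * m + y with ha
  have hdm : a / m = A * m + 1 := by
    rw [ha, mul_comm (A * m + 1) m, Nat.mul_add_div hm0, Nat.div_eq_of_lt hym, add_zero]
  have hmm : a % m = y := by
    rw [ha, mul_comm (A * m + 1) m, Nat.mul_add_mod, Nat.mod_eq_of_lt hym]
  have hdmod : (A * m + 1) % m = 1 := by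
    rw [add_comm, Nat.add_mul_mod_self_right]
    exact Nat.mod_eq_of_lt (by omega)
  have hrs : rs m a = 0 := by
    rw [rs_rec m hm a, hdm, hmm, hdmod, mul_one, ← hc]
    by_cases h0 : c = 0
    · have : y = 0 := by rw [hy, h0, Nat.sub_zero, Nat.mod_self]
      rw [h0, this]
      simp
    · have : y = m - c := by
        rw [hy]; exact Nat.mod_eq_of_lt (by omega)
      rw [this]
      have : c + (m - c) = m := by omega
      rw [this, Nat.mod_self]
  refine ⟨a, ?_, ?_, hrs⟩
  · have h1 : x < A * m ^ 2 := by
      have := Nat.div_add_mod x (m ^ 2)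
      have := Nat.mod_lt x hm20
      have e : A * m ^ 2 = (x / m ^ 2) * m ^ 2 + m ^ 2 := by rw [hA]; ring
      have e2 : (x / m ^ 2) * m ^ 2 = m ^ 2 * (x / m ^ 2) := by ring
      omega
    have h2 : A * m ^ 2 ≤ a := by
      have e : (A * m + 1) * m = A * m ^ 2 + m := by ring
      omega
    omega
  · have h1 : A * m ^ 2 ≤ x + m ^ 2 := by
      have e : A * m ^ 2 = (x / m ^ 2) * m ^ 2 + m ^ 2 := by rw [hA]; ring
      have h2 : (x / m ^ 2) * m ^ 2 ≤ x := Nat.div_mul_le_self x (m ^ 2)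
      omega
    have e : (A * m + 1) * m = A * m ^ 2 + m := by ring
    have h3 : m + m ≤ m ^ 2 := by nlinarith
    omega

/-- Case B: syndetic `fp`-differences for shifts `h * m^(b+1)` with `m ∤ h`. -/
lemma fp_shift_syndetic (m : ℕ) (hm : 16 ≤ m) (b h : ℕ) (hh : h % m ≠ 0) (a : ℕ) :
    ∃ t, a ≤ t ∧ t < a + 12 * m ^ b ∧ fp m t ≠ fp m (t + h * m ^ (b+1)) := by
  have hm2 : 2 ≤ m := by omega
  have hm0 : 0 < m := by omega
  set M := m ^ (b+1) with hM
  have hM0 : 0 < M := by positivity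
  set T := a / M with hT
  have hTa : T * M ≤ a := by rw [hT]; exact Nat.div_mul_le_self a M
  have hTb : a < (T+1) * M := by
    have := Nat.div_add_mod a M
    have := Nat.mod_lt a hM0
    have e : (T+1) * M = M * (a / M) + M := by rw [hT]; ring
    omega
  have hg4 := gapA_le m hm2 b
  have hgM : gapA m b ≤ M := by
    have h6 : 6 * m ^ b ≤ m * m ^ b := by
      have : m ^ b > 0 := by positivity
      nlinarith
    have : M = m * m ^ b := by rw [hM, pow_succ]; ring
    omega
  by_cases hcase : a + gapA m b ≤ (T+1) * M
  · -- window inside slot T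
    set a' := a - T * M with ha'
    have hwin : a' + gapA m b ≤ m ^ (b+1) := by
      have e : (T+1) * M = T * M + M := by ring
      omega
    have hne : fp m T ≠ fp m (T + h) := fp_ne_shift m h hh T
    obtain ⟨o, ho1, ho2, hod⟩ := lett_diff m hm2 (fp m T) (fp m (T+h))
      (good_fp m hm2 T) (good_fp m hm2 (T+h)) hne b a' hwin
    have hoM : o < M := by omega
    refine ⟨T * M + o, by omega, ?_, ?_⟩
    · have h6 : 6 * m ^ b ≤ 12 * m ^ b := by omega
      omega
    · rw [fp_decomp m hm2 (b+1) T o hoM]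
      have e2 : T * M + o + h * M = (T + h) * M + o := by ring
      rw [e2, fp_decomp m hm2 (b+1) (T+h) o hoM]
      exact hod
  · -- use slot T+1
    have hwin : 0 + gapA m b ≤ m ^ (b+1) := by omega
    have hne : fp m (T+1) ≠ fp m (T+1+h) := fp_ne_shift m h hh (T+1)
    obtain ⟨o, ho1, ho2, hod⟩ := lett_diff m hm2 (fp m (T+1)) (fp m (T+1+h))
      (good_fp m hm2 (T+1)) (good_fp m hm2 (T+1+h)) hne b 0 hwin
    have hoM : o < M := by omega
    refine ⟨(T+1) * M + o, by omega, ?_, ?_⟩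
    · have h12 : gapA m b + gapA m b ≤ 12 * m ^ b := by omega
      omega
    · rw [fp_decomp m hm2 (b+1) (T+1) o hoM]
      have e2 : (T+1) * M + o + h * M = (T + 1 + h) * M + o := by ring
      rw [e2, fp_decomp m hm2 (b+1) (T+1+h) o hoM]
      exact hod


def L0 (m : ℕ) : ℕ := 2 * m ^ 2 + 3

lemma L0_pos (m : ℕ) : 0 < L0 m := by unfold L0; omega

def wbit (idx o : ℕ) : ℕ :=
  if o < 2 then 1 else if o % 2 = 1 ∧ (o - 3) / 2 = idx then 1 else 0

lemma wbit_le_one (idx o : ℕ) : wbit idx o ≤ 1 := by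
  unfold wbit; split_ifs <;> omega

lemma wbit_zero (idx : ℕ) : wbit idx 0 = 1 := by unfold wbit; simp

lemma wbit_one (idx : ℕ) : wbit idx 1 = 1 := by unfold wbit; simp

lemma wbit_last (m idx : ℕ) (hm : 1 ≤ m) : wbit idx (2 * m ^ 2 + 2) = 0 := by
  have h1 : 1 ≤ m ^ 2 := Nat.one_le_pow _ _ (by omega)
  unfold wbit
  have h2 : ¬ (2 * m ^ 2 + 2 < 2) := by omega
  have h3 : (2 * m ^ 2 + 2) % 2 = 0 := by omega
  rw [if_neg h2, if_neg (by simp [h3])]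

lemma wbit_marker (idx : ℕ) : wbit idx (3 + 2 * idx) = 1 := by
  unfold wbit
  have h2 : ¬ (3 + 2 * idx < 2) := by omega
  have h3 : (3 + 2 * idx) % 2 = 1 := by omega
  have h4 : (3 + 2 * idx - 3) / 2 = idx := by omega
  rw [if_neg h2, if_pos ⟨h3, h4⟩]

lemma wbit_other (idx idx' : ℕ) (h : idx' ≠ idx) : wbit idx' (3 + 2 * idx) = 0 := by
  unfold wbit
  have h2 : ¬ (3 + 2 * idx < 2) := by omega
  have h4 : (3 + 2 * idx - 3) / 2 = idx := by omega
  rw [if_neg h2, if_neg (by intro hc; exact h (by omega))]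

lemma wbit_no11 (idx o : ℕ) (ho : 1 ≤ o) (h1 : wbit idx o = 1) (h2 : wbit idx (o + 1) = 1) :
    False := by
  unfold wbit at h1 h2
  by_cases hc : o < 2
  · have ho1 : o = 1 := by omega
    subst ho1
    rw [if_neg (by omega : ¬ (1+1 < 2))] at h2
    by_cases h3 : (1+1) % 2 = 1 ∧ (1+1-3)/2 = idx
    · have a1 := h3.1; omega
    · rw [if_neg h3] at h2; omega
  · rw [if_neg hc] at h1
    rw [if_neg (by omega)] at h2
    by_cases h3 : o % 2 = 1 ∧ (o-3)/2 = idx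
    · by_cases h4 : (o+1) % 2 = 1 ∧ (o+1-3)/2 = idx
      · have a1 := h3.1; have a2 := h4.1; omega
      · rw [if_neg h4] at h2; omega
    · rw [if_neg h3] at h1; omega

def idxF (m t : ℕ) : ℕ := (t % m) * m + rs m t

lemma idxF_lt (m : ℕ) (hm : 2 ≤ m) (t : ℕ) : idxF m t < m ^ 2 := by
  have h1 : t % m < m := Nat.mod_lt _ (by omega)
  have h2 : rs m t < m := rs_lt m hm t
  have h4 : (t % m + 1) * m ≤ m * m := Nat.mul_le_mul_right m h1
  have e2 : (t % m + 1) * m = (t % m) * m + m := by ring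
  have e : m ^ 2 = m * m := sq m
  unfold idxF
  omega

lemma idxF_ne (m : ℕ) (hm : 2 ≤ m) (t t' : ℕ) (h : fp m t ≠ fp m t') :
    idxF m t ≠ idxF m t' := by
  intro he
  apply h
  have h1 : t % m < m := Nat.mod_lt _ (by omega)
  have h1' : t' % m < m := Nat.mod_lt _ (by omega)
  have h2 : rs m t < m := rs_lt m hm t
  have h2' : rs m t' < m := rs_lt m hm t'
  unfold idxF at he
  have hm0 : 0 < m := by omega
  have d1 : (t % m * m + rs m t) / m = t % m := by
    rw [mul_comm, Nat.mul_add_div hm0, Nat.div_eq_of_lt h2, add_zero]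
  have d1' : (t' % m * m + rs m t') / m = t' % m := by
    rw [mul_comm, Nat.mul_add_div hm0, Nat.div_eq_of_lt h2', add_zero]
  have hp : t % m = t' % m := by rw [← d1, ← d1', he]
  have hv : rs m t = rs m t' := by
    rw [hp] at he
    omega
  unfold fp
  rw [hp, hv]

def ubit (m n : ℕ) : ℕ := wbit (idxF m (n / L0 m)) (n % L0 m)

lemma ubit_le_one (m n : ℕ) : ubit m n ≤ 1 := wbit_le_one _ _

lemma ubit_eq (m t o : ℕ) (ho : o < L0 m) :
    ubit m (t * L0 m + o) = wbit (idxF m t) o := by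
  unfold ubit
  have e1 : (t * L0 m + o) % L0 m = o := by
    rw [mul_comm, Nat.mul_add_mod]; exact Nat.mod_eq_of_lt ho
  have e2 : (t * L0 m + o) / L0 m = t := by
    rw [mul_comm, Nat.mul_add_div (L0_pos m), Nat.div_eq_of_lt ho, add_zero]
  rw [e1, e2]

/-- Case A mismatch: shifts not divisible by the block length. -/
lemma mismatch_nondiv (m : ℕ) (hm : 16 ≤ m) (l : ℕ) (hl : l % L0 m ≠ 0) (x : ℕ) :
    ∃ j, x ≤ j ∧ j < x + 3 * L0 m ∧ ubit m j ≠ ubit m (j + l) := by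
  set L := L0 m with hLdef
  have hL : 0 < L := L0_pos m
  have hL3 : 3 ≤ L := by rw [hLdef]; unfold L0; nlinarith
  set r := l % L with hr
  set q := l / L with hq
  have hql : q * L + r = l := by rw [hq, hr, mul_comm]; exact Nat.div_add_mod l L
  have hr1 : 1 ≤ r := by omega
  have hrL : r < L := Nat.mod_lt _ hL
  set t := x / L + 1 with ht
  have hβ1 : x < t * L := by
    have h3 := Nat.div_add_mod x L
    have h4 := Nat.mod_lt x hL
    have e : t * L = L * (x / L) + L := by rw [ht]; ring
    omega
  have hβ2 : t * L ≤ x + L := by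
    have h3 := Nat.div_add_mod x L
    have e : t * L = L * (x / L) + L := by rw [ht]; ring
    omega
  have key : ∀ o : ℕ, o + r ≥ L → o + r ≤ L + 1 → o < L →
      ubit m (t * L + o + l) = wbit (idxF m (t + q + 1)) (o + r - L) := by
    intro o h1 h2 h3
    have e : t * L + o + l = (t + q + 1) * L + (o + r - L) := by
      have : t * L + o + l = t * L + o + (q * L + r) := by rw [hql]
      rw [this]
      have e2 : (t + q + 1) * L = t * L + q * L + L := by ring
      omega
    rw [e]
    exact ubit_eq m (t + q + 1) (o + r - L) (by omega)
  by_cases hr2 : r = 1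
  · -- mismatch at o = L - 1
    set o := L - 1 with ho
    refine ⟨t * L + o, by omega, by omega, ?_⟩
    have h1 : ubit m (t * L + o) = wbit (idxF m t) o := ubit_eq m t o (by omega)
    have h2 : ubit m (t * L + o + l) = wbit (idxF m (t + q + 1)) 0 := by
      have := key o (by omega) (by omega) (by omega)
      rw [this]
      congr 1
      omega
    rw [h1, h2, wbit_zero]
    have : o = 2 * m ^ 2 + 2 := by rw [ho, hLdef]; unfold L0; omega
    rw [this, wbit_last m _ (by omega)]
    omega
  · -- r ≥ 2
    have hr2' : 2 ≤ r := by omega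
    set o1 := L - r with ho1
    have h1 : ubit m (t * L + o1 + l) = wbit (idxF m (t + q + 1)) 0 := by
      have := key o1 (by omega) (by omega) (by omega)
      rw [this]
      congr 1
      omega
    have h2 : ubit m (t * L + (o1 + 1) + l) = wbit (idxF m (t + q + 1)) 1 := by
      have := key (o1 + 1) (by omega) (by omega) (by omega)
      rw [this]
      congr 1
      omega
    rw [wbit_zero] at h1
    rw [wbit_one] at h2
    by_cases hA : ubit m (t * L + o1) = 1
    · by_cases hB : ubit m (t * L + (o1 + 1)) = 1
      · exfalso
        rw [ubit_eq m t o1 (by omega)] at hA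
        rw [ubit_eq m t (o1 + 1) (by omega)] at hB
        exact wbit_no11 (idxF m t) o1 (by omega) hA hB
      · refine ⟨t * L + (o1 + 1), by omega, by omega, ?_⟩
        rw [h2]
        exact hB
    · refine ⟨t * L + o1, by omega, by omega, ?_⟩
      rw [h1]
      exact hA

/-- Case B mismatch: shifts that are multiples of the block length. -/
lemma mismatch_div (m : ℕ) (hm : 16 ≤ m) (Λ t : ℕ)
    (hne : fp m t ≠ fp m (t + Λ)) :
    ubit m (t * L0 m + (3 + 2 * idxF m t)) = 1 ∧
    ubit m (t * L0 m + (3 + 2 * idxF m t) + Λ * L0 m) = 0 := by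
  have hm2 : 2 ≤ m := by omega
  have hidx : idxF m t < m ^ 2 := idxF_lt m hm2 t
  have ho : 3 + 2 * idxF m t < L0 m := by unfold L0; omega
  constructor
  · rw [ubit_eq m t _ ho, wbit_marker]
  · have e : t * L0 m + (3 + 2 * idxF m t) + Λ * L0 m = (t + Λ) * L0 m + (3 + 2 * idxF m t) := by
      ring
    rw [e, ubit_eq m (t + Λ) _ ho]
    exact wbit_other (idxF m t) (idxF m (t + Λ)) (idxF_ne m hm2 (t + Λ) t (Ne.symm hne))

/-- Global mismatch gap. -/
lemma mismatch_global (m : ℕ) (hm : 16 ≤ m) (l : ℕ) (hl : 1 ≤ l) :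
    ∃ G, m * G ≤ 12 * l + 3 * m * L0 m ∧
      ∀ x, ∃ j, x ≤ j ∧ j < x + G ∧ ubit m j ≠ ubit m (j + l) := by
  have hm2 : 2 ≤ m := by omega
  have hL : 0 < L0 m := L0_pos m
  by_cases hdiv : l % L0 m = 0
  · -- l = Λ * L0
    obtain ⟨Λ, hΛ⟩ := Nat.dvd_of_mod_eq_zero hdiv
    have hΛ1 : 1 ≤ Λ := by
      rcases Nat.eq_zero_or_pos Λ with h0 | h0
      · subst h0; omega
      · exact h0
    obtain ⟨b, h, he, hne⟩ := exists_pow_factor m hm2 Λ hΛ1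
    cases b with
    | zero =>
      -- every t works
      refine ⟨2 * L0 m, by
        have e : m * (2 * L0 m) = 2 * (m * L0 m) := by ring
        have e2 : 3 * m * L0 m = 3 * (m * L0 m) := by ring
        omega, ?_⟩
      intro x
      set t := x / L0 m + 1 with ht
      have hβ1 : x < t * L0 m := by
        have h3 := Nat.div_add_mod x (L0 m)
        have h4 := Nat.mod_lt x hL
        have e : t * L0 m = L0 m * (x / L0 m) + L0 m := by rw [ht]; ring
        omega
      have hβ2 : t * L0 m ≤ x + L0 m := by
        have h3 := Nat.div_add_mod x (L0 m)
        have e : t * L0 m = L0 m * (x / L0 m) + L0 m := by rw [ht]; ring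
        omega
      have hfp : fp m t ≠ fp m (t + Λ) := by
        apply fp_ne_shift
        rw [he]
        simpa using hne
      obtain ⟨hu1, hu0⟩ := mismatch_div m hm Λ t hfp
      refine ⟨t * L0 m + (3 + 2 * idxF m t), by omega, ?_, ?_⟩
      · have : 3 + 2 * idxF m t < L0 m := by
          have := idxF_lt m hm2 t
          unfold L0; omega
        omega
      · have e : t * L0 m + (3 + 2 * idxF m t) + l = t * L0 m + (3 + 2 * idxF m t) + Λ * L0 m := by
          rw [hΛ]; ring
        rw [e, hu1, hu0]
        omega
    | succ b' =>
      refine ⟨(12 * m ^ b' + 1) * L0 m, ?_, ?_⟩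
      · -- m * G ≤ 12 l + 3 m L0
        have hl' : m ^ (b'+1) * L0 m ≤ l := by
          rw [hΛ, he]
          have : m ^ (b'+1) ≤ h * m ^ (b'+1) := Nat.le_mul_of_pos_left _ (by
            rcases Nat.eq_zero_or_pos h with h0 | h0
            · exfalso; apply hne; rw [h0]; simp
            · exact h0)
          calc m ^ (b'+1) * L0 m ≤ (h * m ^ (b'+1)) * L0 m := Nat.mul_le_mul_right _ this
            _ = L0 m * (h * m ^ (b'+1)) := by ring
        have e : m * ((12 * m ^ b' + 1) * L0 m) = 12 * (m ^ (b'+1) * L0 m) + m * L0 m := by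
          rw [pow_succ]; ring
        have h12 : 12 * (m ^ (b'+1) * L0 m) ≤ 12 * l := by omega
        have e5 : 3 * m * L0 m = m * L0 m + m * L0 m + m * L0 m := by ring
        omega
      · intro x
        set a := x / L0 m + 1 with ha
        have hβ1 : x < a * L0 m := by
          have h3 := Nat.div_add_mod x (L0 m)
          have h4 := Nat.mod_lt x hL
          have e : a * L0 m = L0 m * (x / L0 m) + L0 m := by rw [ha]; ring
          omega
        have hβ2 : a * L0 m ≤ x + L0 m := by
          have h3 := Nat.div_add_mod x (L0 m)
          have e : a * L0 m = L0 m * (x / L0 m) + L0 m := by rw [ha]; ring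
          omega
        obtain ⟨t, ht1, ht2, htne⟩ := fp_shift_syndetic m hm b' h hne a
        rw [← he] at htne
        obtain ⟨hu1, hu0⟩ := mismatch_div m hm Λ t htne
        refine ⟨t * L0 m + (3 + 2 * idxF m t), ?_, ?_, ?_⟩
        · have : a * L0 m ≤ t * L0 m := Nat.mul_le_mul_right _ ht1
          omega
        · have hidx : 3 + 2 * idxF m t < L0 m := by
            have := idxF_lt m hm2 t
            unfold L0; omega
          have h5 : t * L0 m ≤ (a + 12 * m ^ b' - 1) * L0 m := Nat.mul_le_mul_right _ (by omega)
          have hp1 : 1 ≤ 12 * m ^ b' := by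
            have := Nat.one_le_pow b' m (by omega)
            omega
          have e2 : (a + 12 * m ^ b' - 1) * L0 m = a * L0 m + (12 * m ^ b' - 1) * L0 m := by
            rw [Nat.add_sub_assoc hp1, Nat.add_mul]
          have e3 : (12 * m ^ b' - 1) * L0 m + L0 m = 12 * m ^ b' * L0 m := by
            have hp1 : 1 ≤ 12 * m ^ b' := by
              have := Nat.one_le_pow b' m (by omega)
              omega
            rw [Nat.sub_mul]
            have h6 : L0 m ≤ 12 * m ^ b' * L0 m := by
              calc L0 m = 1 * L0 m := by ring
                _ ≤ 12 * m ^ b' * L0 m := Nat.mul_le_mul_right _ (by omega)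
            omega
          have e4 : (12 * m ^ b' + 1) * L0 m = 12 * m ^ b' * L0 m + L0 m := by ring
          omega
        · have e : t * L0 m + (3 + 2 * idxF m t) + l
              = t * L0 m + (3 + 2 * idxF m t) + Λ * L0 m := by
            rw [hΛ]; ring
          rw [e, hu1, hu0]
          omega
  · refine ⟨3 * L0 m, by
      have e : m * (3 * L0 m) = 3 * m * L0 m := by ring
      omega, fun x => mismatch_nondiv m hm l hdiv x⟩


/-! ### The low-asymptotic-exponent sequences -/

def useq (d m : ℕ) (hd : 2 ≤ d) : ℕ → Fin d :=
  fun n => ⟨ubit m n % 2, lt_of_lt_of_le (Nat.mod_lt _ (by omega)) hd⟩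

lemma useq_ne (d m : ℕ) (hd : 2 ≤ d) {j j' : ℕ} (h : ubit m j ≠ ubit m j') :
    useq d m hd j ≠ useq d m hd j' := by
  intro hc
  have h1 := ubit_le_one m j
  have h2 := ubit_le_one m j'
  have h3 : ubit m j % 2 = ubit m j' % 2 := congrArg Fin.val hc
  omega

lemma useq_eq (d m : ℕ) (hd : 2 ≤ d) {j j' : ℕ} (h : ubit m j = ubit m j') :
    useq d m hd j = useq d m hd j' := by
  unfold useq
  exact Fin.ext (by simp [h])

lemma factorAt_length {B : Type*} (u : ℕ → B) (i len : ℕ) :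
    (factorAt u i len).length = len := by
  simp [factorAt]

lemma factorAt_getD {B : Type*} (u : ℕ → B) (i len k : ℕ) (h : k < len) (dflt : B) :
    (factorAt u i len).getD k dflt = u (i + k) := by
  have hl : k < (factorAt u i len).length := by
    rw [factorAt_length]; exact h
  rw [List.getD_eq_getElem _ _ hl]
  simp [factorAt]

lemma factorAt_congr {B : Type*} (u : ℕ → B) (i j len : ℕ)
    (h : ∀ k < len, u (i + k) = u (j + k)) : factorAt u i len = factorAt u j len := by
  unfold factorAt
  apply List.map_congr_left
  intro k hk
  exact h k (List.mem_range.mp hk)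

lemma ubit_periodic (m : ℕ) (hm2 : 2 ≤ m) (K a n : ℕ)
    (hn : n < m ^ K * L0 m) (hrs : rs m a = 0) :
    ubit m (n + m ^ (K+1) * L0 m * a) = ubit m n := by
  have hL := L0_pos m
  have e0 : m ^ (K+1) * L0 m * a = L0 m * (m ^ (K+1) * a) := by ring
  have e1 : (n + m ^ (K+1) * L0 m * a) % L0 m = n % L0 m := by
    rw [e0, Nat.add_mul_mod_self_left]
  have e2 : (n + m ^ (K+1) * L0 m * a) / L0 m = n / L0 m + m ^ (K+1) * a := by
    rw [e0, Nat.add_mul_div_left _ _ hL]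
  have ht : n / L0 m < m ^ K := by
    rw [Nat.div_lt_iff_lt_mul hL]; exact hn
  have hidx : idxF m (n / L0 m + m ^ (K+1) * a) = idxF m (n / L0 m) := by
    unfold idxF
    have e3 : m ^ (K+1) * a = m * (m ^ K * a) := by rw [pow_succ]; ring
    have hmod : (n / L0 m + m ^ (K+1) * a) % m = (n / L0 m) % m := by
      rw [e3, Nat.add_mul_mod_self_left]
    have hrs2 : rs m (n / L0 m + m ^ (K+1) * a) = rs m (n / L0 m) := by
      rw [rs_add_high m hm2 K _ a ht, hrs, add_zero,
        Nat.mod_eq_of_lt (rs_lt m hm2 _)]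
    rw [hmod, hrs2]
  unfold ubit
  rw [e1, e2, hidx]

lemma useq_uniformlyRecurrent (d m : ℕ) (hd : 2 ≤ d) (hm : 16 ≤ m) :
    UniformlyRecurrent (useq d m hd) := by
  intro w hw
  obtain ⟨i, hocc⟩ := hw
  have hm2 : 2 ≤ m := by omega
  set K := i + w.length + 1 with hK
  have hKb : i + w.length < m ^ K := by
    calc i + w.length < 2 ^ K := by
          have h1 : i + w.length < 2 ^ (i + w.length) := Nat.lt_two_pow_self
          have h2 : (2:ℕ) ^ (i + w.length) ≤ 2 ^ K := Nat.pow_le_pow_right (by omega) (by omega)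
          omega
      _ ≤ m ^ K := Nat.pow_le_pow_left (by omega) K
  set P := m ^ (K+1) * L0 m with hP
  have hP0 : 0 < P := by
    rw [hP]
    have := L0_pos m
    positivity
  refine ⟨P * (2 * m ^ 2 + 1) + i + 1, ?_⟩
  intro x
  have hkey : ∀ a, rs m a = 0 → OccursAt (useq d m hd) w (i + P * a) := by
    intro a ha0
    have : factorAt (useq d m hd) (i + P * a) w.length = factorAt (useq d m hd) i w.length := by
      apply factorAt_congr
      intro k hk
      have e5 : i + P * a + k = (i + k) + m ^ (K+1) * L0 m * a := by rw [hP]; ring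
      rw [e5]
      apply useq_eq
      apply ubit_periodic m hm2 K a (i + k) ?_ ha0
      have h6 : i + k < m ^ K := by omega
      have h7 : m ^ K ≤ m ^ K * L0 m := Nat.le_mul_of_pos_right _ (L0_pos m)
      omega
    unfold OccursAt at hocc ⊢
    rw [this]
    exact hocc
  by_cases hxi : x ≤ i
  · refine ⟨i, hxi, by omega, ?_⟩
    have := hkey 0 (rs_zero m)
    simpa using this
  · set x' := (x - i) / P + 1 with hx'
    obtain ⟨a, ha1, ha2, ha0⟩ := rs_zero_window m hm2 x'
    set j := i + P * a with hj
    have hpa : P * a = a * P := by ring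
    have hja : x ≤ j := by
      have h1 : x - i < x' * P := by
        have h3 := Nat.div_add_mod (x - i) P
        have h4 := Nat.mod_lt (x - i) hP0
        have e : x' * P = P * ((x - i) / P) + P := by rw [hx']; ring
        omega
      have h2 : x' * P ≤ a * P := Nat.mul_le_mul_right _ ha1
      omega
    have hjb : j < x + (P * (2 * m ^ 2 + 1) + i + 1) := by
      have h2 : a * P ≤ (x' + 2 * m ^ 2) * P := Nat.mul_le_mul_right _ ha2
      have e : (x' + 2 * m ^ 2) * P = x' * P + 2 * m ^ 2 * P := by ring
      have h1 : x' * P ≤ (x - i) + P := by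
        have e2 : x' * P = ((x - i) / P) * P + P := by rw [hx']; ring
        have := Nat.div_mul_le_self (x - i) P
        omega
      have e4 : P * (2 * m ^ 2 + 1) = 2 * m ^ 2 * P + P := by ring
      omega
    exact ⟨j, hja, hjb, hkey a ha0⟩

lemma power_run_bound (d m : ℕ) (hd : 2 ≤ d) (hm : 16 ≤ m)
    (w : List (Fin d)) (n : ℕ) (hpf : HasPowerFactor (useq d m hd) w n) :
    m * n ≤ m * w.length + 12 * w.length + 3 * m * L0 m := by
  obtain ⟨hw0, i, hi⟩ := hpf
  set l := w.length with hl
  have hl1 : 1 ≤ l := List.length_pos_iff.mpr hw0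
  obtain ⟨G, hG1, hG2⟩ := mismatch_global m hm l hl1
  have hnG : n < l + G := by
    by_contra hcon
    push_neg at hcon
    obtain ⟨j, hj1, hj2, hj3⟩ := hG2 i
    set k := j - i with hk
    have h1 : useq d m hd (i + k) = w.getD (k % w.length) (useq d m hd i) :=
      hi k (by omega)
    have h2 : useq d m hd (i + (k + l)) = w.getD ((k + l) % w.length) (useq d m hd i) :=
      hi (k + l) (by omega)
    have e : (k + l) % w.length = k % w.length := by
      rw [← hl]; exact Nat.add_mod_right k l
    have heq : useq d m hd (i + k) = useq d m hd (i + (k + l)) := by rw [h1, h2, e]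
    have ej : i + k = j := by omega
    have ej2 : i + (k + l) = j + l := by omega
    rw [ej, ej2] at heq
    exact useq_ne d m hd hj3 heq
  have hmn : m * n ≤ m * l + m * G := by
    have h5 : n ≤ l + G := by omega
    calc m * n ≤ m * (l + G) := Nat.mul_le_mul_left m h5
      _ = m * l + m * G := by ring
  omega

lemma maxExpLen_bound (d m : ℕ) (hd : 2 ≤ d) (hm : 16 ≤ m) (l : ℕ) (hl : 1 ≤ l) :
    maxExpLen (useq d m hd) l ≤
      ((m * l + 12 * l + 3 * m * L0 m : ℕ) : ℝ≥0∞) / ((m * l : ℕ) : ℝ≥0∞) := by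
  apply sSup_le
  rintro e ⟨w, n, hwl, hpf, rfl⟩
  have hbound := power_run_bound d m hd hm w n hpf
  rw [hwl] at hbound
  have hm0 : (m : ℝ≥0∞) ≠ 0 := by
    simp only [ne_eq, Nat.cast_eq_zero]
    omega
  have hmt : (m : ℝ≥0∞) ≠ ⊤ := ENNReal.natCast_ne_top m
  have e1 : ((n : ℝ≥0∞)) / (l : ℝ≥0∞) = ((m : ℝ≥0∞) * n) / ((m : ℝ≥0∞) * l) :=
    (ENNReal.mul_div_mul_left _ _ hm0 hmt).symm
  rw [e1]
  have e2 : ((m : ℝ≥0∞) * (n : ℝ≥0∞)) = ((m * n : ℕ) : ℝ≥0∞) := by push_cast; ring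
  have e3 : ((m : ℝ≥0∞) * (l : ℝ≥0∞)) = ((m * l : ℕ) : ℝ≥0∞) := by push_cast; ring
  rw [e2, e3]
  exact ENNReal.div_le_div_right (by exact_mod_cast hbound) _

lemma maxExpLen_eventual (d m : ℕ) (hd : 2 ≤ d) (hm : 16 ≤ m) (l : ℕ)
    (hl1 : 1 ≤ l) (hl2 : 3 * m * L0 m ≤ l) :
    maxExpLen (useq d m hd) l ≤ ((m + 13 : ℕ) : ℝ≥0∞) / ((m : ℕ) : ℝ≥0∞) := by
  refine le_trans (maxExpLen_bound d m hd hm l hl1) ?_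
  have h1 : (m * l + 12 * l + 3 * m * L0 m : ℕ) ≤ (m + 13) * l := by
    have e : (m + 13) * l = m * l + 12 * l + l := by ring
    omega
  have hl0 : (l : ℝ≥0∞) ≠ 0 := by
    simp only [ne_eq, Nat.cast_eq_zero]
    omega
  have hlt : (l : ℝ≥0∞) ≠ ⊤ := ENNReal.natCast_ne_top l
  calc ((m * l + 12 * l + 3 * m * L0 m : ℕ) : ℝ≥0∞) / ((m * l : ℕ) : ℝ≥0∞)
      ≤ (((m + 13) * l : ℕ) : ℝ≥0∞) / ((m * l : ℕ) : ℝ≥0∞) :=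
        ENNReal.div_le_div_right (by exact_mod_cast h1) _
    _ = ((m + 13 : ℕ) : ℝ≥0∞) / ((m : ℕ) : ℝ≥0∞) := by
        push_cast
        rw [ENNReal.mul_div_mul_right _ _ hl0 hlt]

lemma critExp_ne_top (d m : ℕ) (hd : 2 ≤ d) (hm : 16 ≤ m) :
    critExp (useq d m hd) ≠ ⊤ := by
  have hbound : critExp (useq d m hd) ≤ ((13 + 3 * L0 m : ℕ) : ℝ≥0∞) := by
    apply sSup_le
    rintro e ⟨w, n, hpf, rfl⟩
    have hb := power_run_bound d m hd hm w n hpf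
    set l := w.length with hl
    have hl1 : 1 ≤ l := List.length_pos_iff.mpr hpf.1
    have hn : n ≤ (13 + 3 * L0 m) * l := by
      have h3 : l ≤ m * l := Nat.le_mul_of_pos_left l (by omega)
      have h5 : m * L0 m ≤ m * (L0 m * l) :=
        Nat.mul_le_mul_left m (Nat.le_mul_of_pos_right _ (by omega))
      have e6 : 3 * m * L0 m = 3 * (m * L0 m) := by ring
      have e : m * ((13 + 3 * L0 m) * l) = m * l + 12 * (m * l) + 3 * (m * (L0 m * l)) := by
        ring
      have h7 : m * n ≤ m * ((13 + 3 * L0 m) * l) := by omega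
      exact Nat.le_of_mul_le_mul_left h7 (by omega)
    have hl0 : (l : ℝ≥0∞) ≠ 0 := by
      simp only [ne_eq, Nat.cast_eq_zero]
      omega
    have hlt : (l : ℝ≥0∞) ≠ ⊤ := ENNReal.natCast_ne_top l
    calc (n : ℝ≥0∞) / (l : ℝ≥0∞)
        ≤ (((13 + 3 * L0 m) * l : ℕ) : ℝ≥0∞) / (l : ℝ≥0∞) :=
          ENNReal.div_le_div_right (by exact_mod_cast hn) _
      _ = ((13 + 3 * L0 m : ℕ) : ℝ≥0∞) := by
          rw [Nat.cast_mul, mul_div_assoc, ENNReal.div_self hl0 hlt, mul_one]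
  exact ne_top_of_le_ne_top (ENNReal.natCast_ne_top _) hbound

lemma acritExp_bound (d m : ℕ) (hd : 2 ≤ d) (hm : 16 ≤ m) :
    acritExp (useq d m hd) ≤ ((m + 13 : ℕ) : ℝ≥0∞) / ((m : ℕ) : ℝ≥0∞) := by
  unfold acritExp
  rw [if_neg (critExp_ne_top d m hd hm)]
  apply Filter.limsup_le_of_le
  · isBoundedDefault
  · filter_upwards [Filter.eventually_ge_atTop (3 * m * L0 m + 1)] with l hl
    exact maxExpLen_eventual d m hd hm l (by
      have := L0_pos m
      nlinarith) (by omega)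

lemma one_le_acritExp (u : ℕ → A) : 1 ≤ acritExp u := by
  unfold acritExp
  split_ifs with h
  · exact le_top
  · apply Filter.le_limsup_of_frequently_le
    · apply Filter.Eventually.frequently
      filter_upwards [Filter.eventually_ge_atTop 1] with l hl
      have hmem : ((l : ℝ≥0∞) / (l : ℝ≥0∞)) ∈
          {e | ∃ w n, (w : List A).length = l ∧ HasPowerFactor u w n ∧
            e = (n : ℝ≥0∞) / (l : ℝ≥0∞)} := by
        refine ⟨factorAt u 0 l, l, factorAt_length u 0 l, ⟨?_, 0, ?_⟩, rfl⟩
        · intro hc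
          have := factorAt_length u 0 l
          rw [hc] at this
          simp at this
          omega
        · intro k hk
          have hlen : (factorAt u 0 l).length = l := factorAt_length u 0 l
          rw [hlen, Nat.mod_eq_of_lt hk, factorAt_getD u 0 l k hk]
      have hdiv : (l : ℝ≥0∞) / (l : ℝ≥0∞) = 1 :=
        ENNReal.div_self (by simp only [ne_eq, Nat.cast_eq_zero]; omega)
          (ENNReal.natCast_ne_top l)
      calc (1 : ℝ≥0∞) = (l : ℝ≥0∞) / (l : ℝ≥0∞) := hdiv.symm
        _ ≤ maxExpLen u l := le_sSup hmem
    · isBoundedDefault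

open scoped NNReal in
lemma ratio_le_one_add (m : ℕ) (hm : 16 ≤ m) (ε : ℝ≥0) (hε : 0 < ε)
    (hmε : (13 : ℝ≥0) / ε ≤ (m : ℝ≥0)) :
    ((m + 13 : ℕ) : ℝ≥0∞) / ((m : ℕ) : ℝ≥0∞) ≤ 1 + (ε : ℝ≥0∞) := by
  have hm0 : ((m : ℕ) : ℝ≥0∞) ≠ 0 := by
    simp only [ne_eq, Nat.cast_eq_zero]; omega
  have hmt : ((m : ℕ) : ℝ≥0∞) ≠ ⊤ := ENNReal.natCast_ne_top m
  have e1 : ((m + 13 : ℕ) : ℝ≥0∞) = (m : ℝ≥0∞) + 13 := by push_cast; ring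
  rw [e1, ENNReal.add_div, ENNReal.div_self hm0 hmt]
  refine add_le_add le_rfl ?_
  apply ENNReal.div_le_of_le_mul
  have h2 : (13 : ℝ≥0) ≤ ε * m := by
    rw [div_le_iff₀ hε] at hmε
    calc (13 : ℝ≥0) ≤ m * ε := hmε
      _ = ε * m := by ring
  calc (13 : ℝ≥0∞) = ((13 : ℝ≥0) : ℝ≥0∞) := by norm_num
    _ ≤ (((ε * m : ℝ≥0)) : ℝ≥0∞) := ENNReal.coe_le_coe.mpr h2
    _ = (ε : ℝ≥0∞) * (m : ℝ≥0∞) := by push_cast; ring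

open scoped NNReal in
lemma sInf_eq_one_of (S : Set ℝ≥0∞) (hlb : ∀ x ∈ S, 1 ≤ x)
    (hub : ∀ m : ℕ, 16 ≤ m → ∃ x ∈ S, x ≤ ((m + 13 : ℕ) : ℝ≥0∞) / ((m : ℕ) : ℝ≥0∞)) :
    sInf S = 1 := by
  refine le_antisymm ?_ (le_sInf hlb)
  apply ENNReal.le_of_forall_pos_le_add
  intro ε hε _
  set m := max 16 (Nat.ceil ((13 : ℝ≥0) / ε)) with hmdef
  have hm16 : 16 ≤ m := le_max_left _ _
  obtain ⟨x, hxS, hxle⟩ := hub m hm16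
  have hmε : (13 : ℝ≥0) / ε ≤ (m : ℝ≥0) := by
    calc (13 : ℝ≥0) / ε ≤ (Nat.ceil ((13 : ℝ≥0) / ε) : ℝ≥0) := Nat.le_ceil _
      _ ≤ (m : ℝ≥0) := by
          have : Nat.ceil ((13 : ℝ≥0) / ε) ≤ m := le_max_right _ _
          exact_mod_cast this
  calc sInf S ≤ x := sInf_le hxS
    _ ≤ ((m + 13 : ℕ) : ℝ≥0∞) / ((m : ℕ) : ℝ≥0∞) := hxle
    _ ≤ 1 + (ε : ℝ≥0∞) := ratio_le_one_add m hm16 ε hε hmε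

/-- For every `d ≥ 2`, the infimum of the asymptotic critical
exponent over all uniformly recurrent sequences over a `d`-letter alphabet
equals `1`; consequently `RT*(d) = inf {E*(u) : u a d-ary sequence} = 1`. -/
theorem inf_acritExp_uniformlyRecurrent_eq_one_and_RTstar_eq_one
    (d : ℕ) (hd : 2 ≤ d) :
    sInf {x : ℝ≥0∞ | ∃ u : ℕ → Fin d, UniformlyRecurrent u ∧ acritExp u = x} = 1 ∧
    sInf {x : ℝ≥0∞ | ∃ u : ℕ → Fin d, acritExp u = x} = 1 := by
  constructor
  · apply sInf_eq_one_of
    · rintro x ⟨u, _, rfl⟩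
      exact one_le_acritExp u
    · intro m hm
      exact ⟨acritExp (useq d m hd),
        ⟨useq d m hd, useq_uniformlyRecurrent d m hd hm, rfl⟩,
        acritExp_bound d m hd hm⟩
  · apply sInf_eq_one_of
    · rintro x ⟨u, rfl⟩
      exact one_le_acritExp u
    · intro m hm
      exact ⟨acritExp (useq d m hd), ⟨useq d m hd, rfl⟩, acritExp_bound d m hd hm⟩

end Paper
end

section
/- Let u be a recurrent aperiodic sequence over a finite alphabet, let (u_n)_{n∈ℕ} be the sequence of all bispecial factors of u ordered by length, and for each n let r_n be a shortest return word to u_n in u. Then E(u) = 1 + sup_{n∈ℕ} |u_n|/|r_n| and E*(u) = 1 + limsup_{n→∞} |u_n|/|r_n|. -/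
open Filter Topology Matrix
open scoped ENNReal

namespace Paper

open scoped ENNReal

open scoped NNReal

section Helpers
variable {A : Type*} {u : ℕ → A}

@[simp] lemma length_factorAt (u : ℕ → A) (i n : ℕ) : (factorAt u i n).length = n := by
  simp [factorAt]

lemma getElem_factorAt (u : ℕ → A) (i n t : ℕ) (h : t < (factorAt u i n).length) :
    (factorAt u i n)[t] = u (i + t) := by
  simp [factorAt]

lemma occursAt_iff {w : List A} {i : ℕ} :
    OccursAt u w i ↔ ∀ t (h : t < w.length), w[t] = u (i + t) := by
  constructor
  · intro h t ht
    rw [List.getElem_of_eq h ht, getElem_factorAt]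
  · intro h
    refine List.ext_getElem (by simp) ?_
    intro t h1 h2
    rw [getElem_factorAt, h t h1]

lemma occursAt_factorAt (u : ℕ → A) (i n : ℕ) : OccursAt u (factorAt u i n) i := by
  rw [occursAt_iff]
  intro t ht
  rw [getElem_factorAt]

lemma occursAt_transfer {y v : List A} {q s o : ℕ} (hyq : OccursAt u y q)
    (hys : OccursAt u y s) (hv : OccursAt u v (q + o)) (ho : o + v.length ≤ y.length) :
    OccursAt u v (s + o) := by
  rw [occursAt_iff] at *
  intro t ht
  have h1 : o + t < y.length := by omega
  have := hyq (o+t) h1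
  have := hys (o+t) h1
  have := hv t ht
  have e1 : q + o + t = q + (o + t) := by omega
  have e2 : s + o + t = s + (o + t) := by omega
  rw [e2, ← hys (o+t) h1, hyq (o+t) h1, ← e1]
  exact hv t ht

lemma occursAt_cons_iff {c : A} {w : List A} {i : ℕ} :
    OccursAt u (c :: w) i ↔ u i = c ∧ OccursAt u w (i + 1) := by
  rw [occursAt_iff, occursAt_iff]
  constructor
  · intro h
    refine ⟨(h 0 (by simp)).symm, fun t ht => ?_⟩
    have := h (t+1) (by simpa using Nat.succ_lt_succ ht)
    simpa [Nat.add_comm, Nat.add_assoc, Nat.add_left_comm] using this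
  · rintro ⟨h0, h⟩ t ht
    cases t with
    | zero => simpa using h0.symm
    | succ t =>
      have := h t (by simpa using Nat.lt_of_succ_lt_succ ht)
      simpa [Nat.add_comm, Nat.add_assoc, Nat.add_left_comm] using this

lemma occursAt_append_singleton_iff {c : A} {w : List A} {i : ℕ} :
    OccursAt u (w ++ [c]) i ↔ OccursAt u w i ∧ u (i + w.length) = c := by
  rw [occursAt_iff, occursAt_iff]
  constructor
  · intro h
    constructor
    · intro t ht
      have := h t (by simp; omega)
      rwa [List.getElem_append_left ht] at this
    · have := h w.length (by simp)
      simp at this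
      exact this.symm
  · rintro ⟨h1, h2⟩ t ht
    simp at ht
    rcases Nat.lt_or_ge t w.length with h | h
    · rw [List.getElem_append_left h]
      exact h1 t h
    · have : t = w.length := by omega
      subst this
      simpa using h2.symm

lemma factorAt_succ (u : ℕ → A) (i n : ℕ) :
    factorAt u i (n+1) = factorAt u i n ++ [u (i + n)] := by
  simp [factorAt, List.range_succ]

end Helpers
section Stages
variable {A : Type*} {u : ℕ → A}

lemma isFactor_of_occursAt {w : List A} {i : ℕ} (h : OccursAt u w i) : IsFactor u w := ⟨i, h⟩

/-- Stage A: extend a word with a pair of occurrences at distance `l` to a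
right special one keeping the pair. -/
lemma exists_rightSpecial_pair (hap : ¬ EventuallyPeriodic u) {l : ℕ} (hl : 0 < l)
    {z : List A} {q : ℕ} (h1 : OccursAt u z q) (h2 : OccursAt u z (q + l)) :
    ∃ v : List A, RightSpecial u v ∧ z.length ≤ v.length ∧
      OccursAt u v q ∧ OccursAt u v (q + l) := by
  by_contra hno
  push_neg at hno
  have Q : ∀ m, OccursAt u (factorAt u q (z.length + m)) (q + l) := by
    intro m
    induction m with
    | zero =>
      have : factorAt u q (z.length + 0) = z := by
        rw [Nat.add_zero]; exact h1.symm
      rw [this]; exact h2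
    | succ m ih =>
      set x := factorAt u q (z.length + m) with hx
      have hxq : OccursAt u x q := occursAt_factorAt u q _
      have hnrs : ¬ RightSpecial u x := by
        intro hrs
        exact (hno x hrs (by simp [hx]) hxq) ih
      have hxlen : x.length = z.length + m := by simp [hx]
      have hf1 : IsFactor u (x ++ [u (q + (z.length + m))]) := by
        refine ⟨q, occursAt_append_singleton_iff.mpr ⟨hxq, by rw [hxlen]⟩⟩
      have hf2 : IsFactor u (x ++ [u (q + l + (z.length + m))]) := by
        refine ⟨q + l, occursAt_append_singleton_iff.mpr ⟨ih, by rw [hxlen]⟩⟩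
      have heq : u (q + (z.length + m)) = u (q + l + (z.length + m)) := by
        by_contra hne
        exact hnrs ⟨_, _, hne, hf1, hf2⟩
      have : z.length + (m + 1) = (z.length + m) + 1 := by omega
      rw [this, factorAt_succ]
      exact occursAt_append_singleton_iff.mpr ⟨ih, by rw [hxlen, ← heq]⟩
  apply hap
  refine ⟨l, hl, q, fun n hn => ?_⟩
  have hQ := Q (n - q + 1)
  rw [occursAt_iff] at hQ
  have ht : n - q < (factorAt u q (z.length + (n - q + 1))).length := by
    simp; omega
  have e1 := hQ (n - q) ht
  rw [getElem_factorAt] at e1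
  have e2 : q + l + (n - q) = n + l := by omega
  have e3 : q + (n - q) = n := by omega
  rw [e2, e3] at e1
  exact e1.symm

end Stages
section Stages2
variable {A : Type*} {u : ℕ → A}

/-- Stage A': a pair of occurrences at distance `l` can be found arbitrarily far. -/
lemma pairs_arbitrarily_far (hrec : Recurrent u) {v : List A} {q l : ℕ}
    (h1 : OccursAt u v q) (h2 : OccursAt u v (q + l)) :
    ∀ N, ∃ s, N ≤ s ∧ OccursAt u v s ∧ OccursAt u v (s + l) := by
  intro N
  set y := factorAt u q (v.length + l) with hy
  have hyq : OccursAt u y q := occursAt_factorAt u q _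
  obtain ⟨s, hs, hys⟩ := hrec y (isFactor_of_occursAt hyq) N
  refine ⟨s, hs, ?_, ?_⟩
  · have := occursAt_transfer (o := 0) hyq hys (by simpa using h1) (by simp [hy])
    simpa using this
  · exact occursAt_transfer (o := l) hyq hys h2 (by simp [hy]; omega)

/-- From a pair of occurrences at distance `l`, extract a return word of length at most `l`. -/
lemma exists_return_le (hl : 0 < l) {b : List A} {s : ℕ}
    (h1 : OccursAt u b s) (h2 : OccursAt u b (s + l)) :
    ∃ rw : List A, IsReturnWord u b rw ∧ rw.length ≤ l := by
  have hne : {t | s < t ∧ OccursAt u b t}.Nonempty := ⟨s + l, by omega, h2⟩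
  set j := sInf {t | s < t ∧ OccursAt u b t} with hj
  have hjmem : s < j ∧ OccursAt u b j := Nat.sInf_mem hne
  have hjle : j ≤ s + l := Nat.sInf_le ⟨by omega, h2⟩
  refine ⟨factorAt u s (j - s), ?_, by simp; omega⟩
  refine ⟨s, j, hjmem.1, h1, hjmem.2, ?_, rfl⟩
  intro t ht1 ht2 hocc
  exact Nat.notMem_of_lt_sInf ht2 ⟨ht1, hocc⟩

end Stages2
section StageB
variable {A : Type*} {u : ℕ → A}

/-- Stage B: extend a right special word with arbitrarily far pairs at distance `l`
to a bispecial one with a pair. -/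
lemma exists_bispecial_pair (hrec : Recurrent u) (hap : ¬ EventuallyPeriodic u)
    {l : ℕ} (hl : 0 < l) {v : List A} (hv : RightSpecial u v)
    (hAFP : ∀ N, ∃ s, N ≤ s ∧ OccursAt u v s ∧ OccursAt u v (s + l)) :
    ∃ (b : List A) (s : ℕ), Bispecial u b ∧ v.length ≤ b.length ∧
      OccursAt u b s ∧ OccursAt u b (s + l) := by
  by_contra hno
  push_neg at hno
  -- the invariant
  set P : List A → Prop := fun x => RightSpecial u x ∧
    (∀ N, ∃ s, N ≤ s ∧ OccursAt u x s ∧ OccursAt u x (s + l)) ∧ v.length ≤ x.length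
    with hP
  have hPv : P v := ⟨hv, hAFP, le_refl _⟩
  -- no P-word is left special
  have hnotLS : ∀ x, P x → ¬ LeftSpecial u x := by
    rintro x ⟨hrs, hafp, hlen⟩ hls
    obtain ⟨s, hs, h1, h2⟩ := hafp 0
    exact hno x s ⟨hls, hrs⟩ hlen h1 h2
  -- the extension step
  have step : ∀ x, P x → ∃ c, P (c :: x) ∧ ∀ i, OccursAt u x (i + 1) → u i = c := by
    rintro x hPx
    obtain ⟨hrs, hafp, hlen⟩ := hPx
    have hnls := hnotLS x ⟨hrs, hafp, hlen⟩
    obtain ⟨s, hs, h1, h2⟩ := hafp 1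
    set c := u (s - 1) with hc
    have hcx : OccursAt u (c :: x) (s - 1) := by
      rw [occursAt_cons_iff]
      exact ⟨rfl, by have : s - 1 + 1 = s := by omega
                     rwa [this]⟩
    have huniq : ∀ i, OccursAt u x (i + 1) → u i = c := by
      intro i hi
      by_contra hne
      exact hnls ⟨u i, c, hne, ⟨i, occursAt_cons_iff.mpr ⟨rfl, hi⟩⟩,
        isFactor_of_occursAt hcx⟩
    refine ⟨c, ⟨?_, ?_, by simp; omega⟩, huniq⟩
    · -- right special
      obtain ⟨c1, c2, hne, hf1, hf2⟩ := hrs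
      have key : ∀ c', IsFactor u (x ++ [c']) → IsFactor u ((c :: x) ++ [c']) := by
        rintro c' hf
        obtain ⟨j, hj1, hj⟩ := hrec _ hf 1
        have hxj : OccursAt u x j := by
          rw [occursAt_iff] at hj ⊢
          intro t ht
          have := hj t (by simp; omega)
          rwa [List.getElem_append_left ht] at this
        have : u (j - 1) = c := huniq (j-1) (by have : j - 1 + 1 = j := by omega
                                                rwa [this])
        refine ⟨j - 1, ?_⟩
        rw [List.cons_append, occursAt_cons_iff]
        refine ⟨this, ?_⟩
        have e : j - 1 + 1 = j := by omega
        rwa [e]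
      exact ⟨c1, c2, hne, key c1 hf1, key c2 hf2⟩
    · -- arbitrarily far pairs
      intro N
      obtain ⟨s', hs', h1', h2'⟩ := hafp (N + 1)
      refine ⟨s' - 1, by omega, ?_, ?_⟩
      · rw [occursAt_cons_iff]
        refine ⟨huniq (s'-1) ?_, ?_⟩ <;>
          · have e : s' - 1 + 1 = s' := by omega
            rwa [e]
      · rw [occursAt_cons_iff]
        have e : s' - 1 + l + 1 = s' + l := by omega
        refine ⟨huniq (s' - 1 + l) (by rwa [e]), by rwa [e]⟩
  -- the canonical chain
  let V : ℕ → {x : List A // P x} := fun m =>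
    Nat.rec ⟨v, hPv⟩ (fun _ p => ⟨Classical.choose (step p.1 p.2) :: p.1,
      (Classical.choose_spec (step p.1 p.2)).1⟩) m
  have hVsucc : ∀ m, (V (m+1)).1 = Classical.choose (step (V m).1 (V m).2) :: (V m).1 :=
    fun m => rfl
  have huniqV : ∀ m i, OccursAt u (V m).1 (i + 1) →
      u i = Classical.choose (step (V m).1 (V m).2) :=
    fun m => (Classical.choose_spec (step (V m).1 (V m).2)).2
  -- pullback of occurrences
  have pull : ∀ m i, OccursAt u v (i + m) → OccursAt u (V m).1 i := by
    intro m
    induction m with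
    | zero => intro i h; exact h
    | succ m ih =>
      intro i h
      have h' : OccursAt u v ((i + 1) + m) := by
        have e : (i+1) + m = i + (m+1) := by omega
        rwa [e]
      have hVm := ih (i+1) h'
      have hc := huniqV m i hVm
      rw [hVsucc m, occursAt_cons_iff]
      exact ⟨hc, hVm⟩
  -- periodicity
  apply hap
  refine ⟨l, hl, 0, fun x _ => ?_⟩
  obtain ⟨s, hs, h1, h2⟩ := hAFP (x + 1)
  set m := s - (x + 1) with hm
  have e1 : s = (x + 1) + m := by omega
  have hVx : OccursAt u (V m).1 (x + 1) := pull m (x+1) (by rwa [← e1])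
  have hVxl : OccursAt u (V m).1 (x + l + 1) := by
    apply pull m
    have e2 : x + l + 1 + m = s + l := by omega
    rwa [e2]
  rw [huniqV m x hVx, huniqV m (x + l) hVxl]

end StageB
section Key
variable {A : Type*} {u : ℕ → A}

lemma length_pos_of_return {w rw : List A} (h : IsReturnWord u w rw) : 0 < rw.length := by
  obtain ⟨i, j, hij, _, _, _, hrw⟩ := h
  rw [hrw]; simp; omega

/-- KEY: every power with exponent `> 1` is dominated by a bispecial factor
with a short return word. -/
lemma key_bispecial (hrec : Recurrent u) (hap : ¬ EventuallyPeriodic u)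
    {w : List A} {n : ℕ} (hpf : HasPowerFactor u w n) (hn : w.length < n) :
    ∃ (b : List A) (rw : List A), Bispecial u b ∧ IsReturnWord u b rw ∧
      n - w.length ≤ b.length ∧ rw.length ≤ w.length := by
  obtain ⟨hwne, i, hi⟩ := hpf
  set l := w.length with hldef
  have hl : 0 < l := List.length_pos_iff.mpr hwne
  -- the word z with a pair at distance l
  set z := factorAt u i (n - l) with hz
  have hz1 : OccursAt u z i := occursAt_factorAt u i _
  have hz2 : OccursAt u z (i + l) := by
    rw [occursAt_iff]
    intro t ht
    simp only [hz] at ht ⊢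
    rw [getElem_factorAt]
    have ht' : t < n - l := by simpa using ht
    have e1 := hi t (by omega)
    have e2 := hi (t + l) (by omega)
    have e3 : (t + l) % w.length = t % w.length := Nat.add_mod_right t w.length
    rw [e1, ← e3]
    have e4 : i + l + t = i + (t + l) := by omega
    rw [e4, e2]
  obtain ⟨v, hvrs, hvlen, hv1, hv2⟩ := exists_rightSpecial_pair hap hl hz1 hz2
  have hAFP := pairs_arbitrarily_far hrec hv1 hv2
  obtain ⟨b, s, hbbi, hblen, hb1, hb2⟩ := exists_bispecial_pair hrec hap hl hvrs hAFP
  obtain ⟨rw, hrw, hrwlen⟩ := exists_return_le hl hb1 hb2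
  refine ⟨b, rw, hbbi, hrw, ?_, hrwlen⟩
  have : z.length = n - l := by simp [hz]
  omega

/-- The return word power: `r_n^(1 + |B n|/|r n|)` is a factor. -/
lemma hasPowerFactor_return {b rw : List A} (h : IsReturnWord u b rw) :
    HasPowerFactor u rw (rw.length + b.length) := by
  obtain ⟨i, j, hij, hbi, hbj, hmid, hrw⟩ := h
  have hrwlen : rw.length = j - i := by rw [hrw]; simp
  set d := j - i with hd
  have hdpos : 0 < d := by omega
  refine ⟨by rw [hrw]; intro hemp; apply_fun List.length at hemp; simp at hemp; omega, i, ?_⟩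
  have period : ∀ k, k < d + b.length → u (i + k) = u (i + k % d) := by
    intro k
    induction k using Nat.strong_induction_on with
    | _ k ih =>
      intro hk
      rcases Nat.lt_or_ge k d with h | h
      · rw [Nat.mod_eq_of_lt h]
      · have hkd : k - d < b.length := by omega
        have hb1 := occursAt_iff.mp hbi (k - d) hkd
        have hb2 := occursAt_iff.mp hbj (k - d) hkd
        have e1 : j + (k - d) = i + k := by omega
        rw [e1] at hb2
        have e2 : u (i + k) = u (i + (k - d)) := by rw [← hb2, hb1]
        rw [e2, ih (k - d) (by omega) (by omega)]
        congr 1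
        rw [Nat.mod_eq_sub_mod h]
    
  intro k hk
  have hkmod : k % rw.length < rw.length := Nat.mod_lt _ (by omega)
  rw [List.getD_eq_getElem rw _ hkmod]
  have := occursAt_iff.mp (by rw [hrw]; exact occursAt_factorAt u i d : OccursAt u rw i)
    (k % rw.length) hkmod
  rw [this]
  rw [hrwlen]
  exact period k (by omega)

end Key
section Arith
variable {A : Type*} {u : ℕ → A}

lemma one_add_div_eq {a b : ℕ} (hb : 0 < b) :
    (1:ℝ≥0∞) + (a:ℝ≥0∞)/(b:ℝ≥0∞) = ((b + a : ℕ):ℝ≥0∞) / (b:ℝ≥0∞) := by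
  push_cast
  rw [ENNReal.add_div, ENNReal.div_self (by exact_mod_cast hb.ne') (by simp)]

lemma div_split {b n : ℕ} (hb : 0 < b) (h : b < n) :
    (n:ℝ≥0∞)/(b:ℝ≥0∞) = 1 + ((n - b : ℕ):ℝ≥0∞)/(b:ℝ≥0∞) := by
  rw [one_add_div_eq hb]
  congr 2
  omega

lemma nat_div_le_one {a b : ℕ} (hb : 0 < b) (h : a ≤ b) : (a:ℝ≥0∞)/(b:ℝ≥0∞) ≤ 1 := by
  calc (a:ℝ≥0∞)/(b:ℝ≥0∞) ≤ (b:ℝ≥0∞)/(b:ℝ≥0∞) :=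
        ENNReal.div_le_div (by exact_mod_cast h) le_rfl
    _ = 1 := ENNReal.div_self (by exact_mod_cast hb.ne') (by simp)

/-- Part 1 of the theorem. -/
lemma part1 [Fintype A] [DecidableEq A] (u : ℕ → A)
    (hrec : Recurrent u) (hap : ¬ EventuallyPeriodic u)
    (B : ℕ → List A)
    (hB2 : ∀ w, Bispecial u w → ∃ n, B n = w)
    (r : ℕ → List A)
    (hr : ∀ n, IsReturnWord u (B n) (r n))
    (hrmin : ∀ n s, IsReturnWord u (B n) s → (r n).length ≤ s.length) :
    critExp u = 1 + (⨆ n, ((B n).length : ℝ≥0∞) / ((r n).length : ℝ≥0∞)) := by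
  set ρ : ℕ → ℝ≥0∞ := fun n => ((B n).length : ℝ≥0∞) / ((r n).length : ℝ≥0∞) with hρ
  have hrpos : ∀ n, 0 < (r n).length := fun n => length_pos_of_return (hr n)
  apply le_antisymm
  · -- upper bound
    apply sSup_le
    rintro e ⟨w, n, hpf, rfl⟩
    have hl : 0 < w.length := List.length_pos_iff.mpr hpf.1
    rcases le_or_gt n w.length with h | h
    · exact (nat_div_le_one hl h).trans le_self_add
    · obtain ⟨b, rw, hbbi, hret, hlen1, hlen2⟩ := key_bispecial hrec hap hpf h
      obtain ⟨n0, hn0⟩ := hB2 b hbbi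
      have hr0 : (r n0).length ≤ w.length :=
        le_trans (hrmin n0 rw (hn0 ▸ hret)) hlen2
      rw [div_split hl h]
      refine add_le_add_right (le_trans ?_ (le_iSup ρ n0)) 1
      exact ENNReal.div_le_div (by exact_mod_cast hn0 ▸ hlen1) (by exact_mod_cast hr0)
  · -- lower bound
    rw [ENNReal.add_iSup]
    apply iSup_le
    intro n0
    apply le_sSup
    refine ⟨r n0, (r n0).length + (B n0).length, hasPowerFactor_return (hr n0), ?_⟩
    exact one_add_div_eq (hrpos n0)

end Arith
section Fin
variable {A : Type*}

lemma finite_length_le [Fintype A] (B : ℕ → List A) (hB3 : Function.Injective B) (m : ℕ) :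
    {n | (B n).length ≤ m}.Finite := by
  have hfin : Finite (Fin (m+1) → Option A) := inferInstance
  apply Set.Finite.of_finite_image
    (f := fun n => fun i : Fin (m+1) => (B n)[(i:ℕ)]?)
  · exact Set.toFinite _
  · intro n1 h1 n2 h2 heq
    apply hB3
    apply List.ext_getElem?
    intro i
    rcases Nat.lt_or_ge i (m+1) with h | h
    · exact congrFun heq ⟨i, h⟩
    · rw [List.getElem?_eq_none (by simp at h1 ⊢; omega),
        List.getElem?_eq_none (by simp at h2 ⊢; omega)]

end Fin

/-- For a recurrent aperiodic sequence `u` over a finite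
alphabet, if `(B n)` enumerates all bispecial factors of `u` ordered by length
and `r n` is a shortest return word to `B n`, then
`E(u) = 1 + sup_n |B n|/|r n|` and `E*(u) = 1 + limsup_n |B n|/|r n|`. -/
theorem critExp_and_acritExp_eq_via_return_words
    {A : Type*} [Fintype A] [DecidableEq A] (u : ℕ → A)
    (hrec : Recurrent u) (hap : ¬ EventuallyPeriodic u)
    (B : ℕ → List A)
    (hB1 : ∀ n, Bispecial u (B n))
    (hB2 : ∀ w, Bispecial u w → ∃ n, B n = w)
    (hB3 : Function.Injective B)
    (hB4 : Monotone fun n => (B n).length)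
    (r : ℕ → List A)
    (hr : ∀ n, IsReturnWord u (B n) (r n))
    (hrmin : ∀ n s, IsReturnWord u (B n) s → (r n).length ≤ s.length) :
    critExp u = 1 + (⨆ n, ((B n).length : ℝ≥0∞) / ((r n).length : ℝ≥0∞)) ∧
    acritExp u = 1 + Filter.limsup
      (fun n => ((B n).length : ℝ≥0∞) / ((r n).length : ℝ≥0∞)) Filter.atTop := by
  have hpart1 := part1 u hrec hap B hB2 r hr hrmin
  refine ⟨hpart1, ?_⟩
  set ρ : ℕ → ℝ≥0∞ := fun n => ((B n).length : ℝ≥0∞) / ((r n).length : ℝ≥0∞) with hρ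
  set S : ℝ≥0∞ := ⨆ n, ρ n with hS
  set L : ℝ≥0∞ := limsup ρ atTop with hL
  have hrpos : ∀ n, 0 < (r n).length := fun n => length_pos_of_return (hr n)
  have hρtop : ∀ n, ρ n < ⊤ := fun n =>
    ENNReal.div_lt_top (by simp) (by exact_mod_cast (hrpos n).ne')
  by_cases htop : critExp u = ⊤
  · -- infinite case
    have hStop : S = ⊤ := by
      rw [hpart1] at htop
      rcases ENNReal.add_eq_top.mp htop with h | h
      · simp at h
      · exact h
    have hLtop : L = ⊤ := by
      rw [hL, limsup_eq_iInf_iSup_of_nat']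
      rw [iInf_eq_top]
      intro N
      by_contra hT
      have hFlt : (Finset.range N).sup ρ < ⊤ :=
        (Finset.sup_lt_iff (by simp)).mpr (fun n _ => hρtop n)
      have hcov : S ≤ (Finset.range N).sup ρ ⊔ ⨆ i, ρ (i + N) := by
        apply iSup_le
        intro n
        rcases Nat.lt_or_ge n N with h | h
        · exact le_sup_of_le_left (Finset.le_sup (Finset.mem_range.mpr h))
        · refine le_sup_of_le_right ?_
          have : ρ n = ρ ((n - N) + N) := by congr 1; omega
          rw [this]
          exact le_iSup (fun i => ρ (i + N)) (n - N)
      rw [hStop] at hcov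
      have : ((Finset.range N).sup ρ ⊔ ⨆ i, ρ (i + N)) < ⊤ :=
        sup_lt_iff.mpr ⟨hFlt, lt_top_iff_ne_top.mpr hT⟩
      exact absurd (lt_of_le_of_lt hcov this) (lt_irrefl _)
    have hac : acritExp u = ⊤ := by unfold acritExp; rw [if_pos htop]
    rw [hac, hLtop]
    simp
  · -- finite case
    have hac : acritExp u = limsup (fun l => maxExpLen u l) atTop := by
      unfold acritExp; rw [if_neg htop]
    have hSne : S ≠ ⊤ := by
      intro h
      rw [hpart1, h] at htop
      simp at htop
    have hLS : L ≤ S := limsup_le_of_le (by isBoundedDefault)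
      (Eventually.of_forall fun n => le_iSup ρ n)
    have hLne : L ≠ ⊤ := (lt_of_le_of_lt hLS (lt_top_iff_ne_top.mpr hSne)).ne
    rw [hac]
    apply le_antisymm
    · -- limsup of maxExpLen ≤ 1 + L
      apply ENNReal.le_of_forall_pos_le_add
      intro ε hε _
      have hLlt : L < L + (ε:ℝ≥0∞) :=
        ENNReal.lt_add_right hLne (by exact_mod_cast hε.ne')
      obtain ⟨N₀, hN₀⟩ := eventually_atTop.mp (eventually_lt_of_limsup_lt hLlt)
      set M := (Finset.range N₀).sup (fun n => (B n).length) with hM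
      obtain ⟨L0, hL0⟩ := exists_nat_ge ((M:ℝ≥0) / ε)
      have hML0 : (M:ℝ≥0∞) ≤ (ε:ℝ≥0∞) * L0 := by
        have h1 : (M:ℝ≥0) ≤ ε * L0 := by
          rw [div_le_iff₀ hε] at hL0
          calc (M:ℝ≥0) ≤ (L0:ℝ≥0) * ε := hL0
            _ = ε * L0 := mul_comm _ _
        calc (M:ℝ≥0∞) = ((M:ℝ≥0):ℝ≥0∞) := by norm_cast
          _ ≤ (((ε * L0 : ℝ≥0)):ℝ≥0∞) := by exact_mod_cast h1
          _ = (ε:ℝ≥0∞) * L0 := by push_cast; ring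
      apply limsup_le_of_le (by isBoundedDefault)
      rw [eventually_atTop]
      refine ⟨max L0 1, fun l hl => ?_⟩
      have hL0l : L0 ≤ l := le_trans (le_max_left _ _) hl
      have hlpos : 0 < l := lt_of_lt_of_le (by norm_num) (le_trans (le_max_right _ _) hl)
      apply sSup_le
      rintro e ⟨w, n, hwl, hpf, rfl⟩
      rcases le_or_gt n l with h | h
      · calc (n:ℝ≥0∞)/(l:ℝ≥0∞) ≤ 1 := nat_div_le_one hlpos h
          _ ≤ 1 + L := le_self_add
          _ ≤ (1 + L) + ε := le_self_add
      · obtain ⟨b, rw', hbbi, hret, hlen1, hlen2⟩ :=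
          key_bispecial hrec hap hpf (by omega : w.length < n)
        obtain ⟨n0, hn0⟩ := hB2 b hbbi
        have hr0 : (r n0).length ≤ l :=
          le_trans (hrmin n0 rw' (hn0 ▸ hret)) (by omega)
        have hblen : n - l ≤ (B n0).length := by rw [hn0]; omega
        rw [div_split hlpos h]
        rcases Nat.lt_or_ge n0 N₀ with hcase | hcase
        · have h1 : n - l ≤ M :=
            le_trans hblen (Finset.le_sup (f := fun n => (B n).length) (Finset.mem_range.mpr hcase))
          have h2 : ((n-l:ℕ):ℝ≥0∞)/(l:ℝ≥0∞) ≤ (ε:ℝ≥0∞) := by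
            calc ((n-l:ℕ):ℝ≥0∞)/(l:ℝ≥0∞) ≤ (M:ℝ≥0∞)/(l:ℝ≥0∞) :=
                  ENNReal.div_le_div (by exact_mod_cast h1) le_rfl
              _ ≤ ((ε:ℝ≥0∞) * L0)/(l:ℝ≥0∞) := ENNReal.div_le_div hML0 le_rfl
              _ ≤ ((ε:ℝ≥0∞) * l)/(l:ℝ≥0∞) :=
                  ENNReal.div_le_div (mul_le_mul_right (by exact_mod_cast hL0l) _) le_rfl
              _ = (ε:ℝ≥0∞) * ((l:ℝ≥0∞)/(l:ℝ≥0∞)) := mul_div_assoc _ _ _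
              _ = (ε:ℝ≥0∞) := by
                  rw [ENNReal.div_self (by exact_mod_cast hlpos.ne') (by simp), mul_one]
          calc 1 + ((n-l:ℕ):ℝ≥0∞)/(l:ℝ≥0∞) ≤ 1 + (ε:ℝ≥0∞) := add_le_add_right h2 1
            _ ≤ (1 + L) + ε := add_le_add_left le_self_add _
        · have h3 : ((n-l:ℕ):ℝ≥0∞)/(l:ℝ≥0∞) ≤ ρ n0 :=
            ENNReal.div_le_div (by exact_mod_cast hblen) (by exact_mod_cast hr0)
          calc 1 + ((n-l:ℕ):ℝ≥0∞)/(l:ℝ≥0∞) ≤ 1 + ρ n0 := add_le_add_right h3 1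
            _ ≤ 1 + (L + ε) := add_le_add_right (hN₀ n0 hcase).le 1
            _ = (1 + L) + ε := (add_assoc _ _ _).symm
    · -- 1 + L ≤ limsup of maxExpLen
      have hRtop : Tendsto (fun n => (r n).length) atTop atTop := by
        rw [tendsto_atTop]
        intro C
        obtain ⟨m₀, hm₀⟩ := ENNReal.exists_nat_gt
          (ENNReal.mul_ne_top (ENNReal.natCast_ne_top C) hSne)
        have hsub : {n | (r n).length < C} ⊆ {n | (B n).length ≤ m₀} := by
          intro n hn
          simp only [Set.mem_setOf_eq] at hn ⊢
          have hC0 : (C:ℝ≥0∞) ≠ 0 := by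
            have := hrpos n
            exact_mod_cast (by omega : C ≠ 0)
          have hd : ((B n).length : ℝ≥0∞) / (C:ℝ≥0∞) ≤ S := by
            calc ((B n).length : ℝ≥0∞) / (C:ℝ≥0∞) ≤ ρ n :=
                  ENNReal.div_le_div le_rfl (by exact_mod_cast hn.le)
              _ ≤ S := le_iSup ρ n
          have hd2 : ((B n).length : ℝ≥0∞) ≤ S * C :=
            (ENNReal.div_le_iff hC0 (ENNReal.natCast_ne_top C)).mp hd
          have hd3 : ((B n).length : ℝ≥0∞) < (m₀:ℝ≥0∞) :=
            lt_of_le_of_lt (hd2.trans_eq (mul_comm _ _)) hm₀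
          exact_mod_cast hd3.le
        have hfin := (finite_length_le B hB3 m₀).subset hsub
        obtain ⟨N, hN⟩ := hfin.bddAbove
        refine eventually_atTop.mpr ⟨N+1, fun n hn => ?_⟩
        by_contra hcon
        push_neg at hcon
        have := hN (Set.mem_setOf_eq ▸ hcon : n ∈ {n | (r n).length < C})
        omega
      have h1 : ∀ n, 1 + ρ n ≤ maxExpLen u ((r n).length) := by
        intro n
        apply le_sSup
        exact ⟨r n, (r n).length + (B n).length, rfl, hasPowerFactor_return (hr n),
          one_add_div_eq (hrpos n)⟩
      have h2 : limsup (fun n => 1 + ρ n) atTop ≤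
          limsup (fun n => maxExpLen u ((r n).length)) atTop :=
        limsup_le_limsup (Eventually.of_forall h1)
      have h3 : limsup (fun n => maxExpLen u ((r n).length)) atTop ≤
          limsup (fun l => maxExpLen u l) atTop := by
        conv_rhs => rw [limsup_eq_iInf_iSup_of_nat']
        apply le_iInf
        intro N
        apply limsup_le_of_le (by isBoundedDefault)
        filter_upwards [hRtop.eventually_ge_atTop N] with n hn
        have he : maxExpLen u ((r n).length) = maxExpLen u (((r n).length - N) + N) := by
          congr 1; omega
        rw [he]
        exact le_iSup (fun i => maxExpLen u (i + N)) _
      have h4 : 1 + L ≤ limsup (fun n => 1 + ρ n) atTop := by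
        rw [hL, limsup_eq_iInf_iSup_of_nat' (u := ρ),
          limsup_eq_iInf_iSup_of_nat' (u := fun n => 1 + ρ n)]
        calc 1 + ⨅ N, ⨆ i, ρ (i+N) ≤ ⨅ N, (1 + ⨆ i, ρ (i+N)) :=
              le_iInf fun N => add_le_add_right (iInf_le _ N) 1
          _ = ⨅ N, ⨆ i, (1 + ρ (i+N)) := by
              apply iInf_congr
              intro N
              exact ENNReal.add_iSup _
        
      exact le_trans h4 (le_trans h2 h3)

end Paper
end
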